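/- arXiv:1404.1480 — 6 statements merged into one kernel-verified Lean document; each statement's English description precedes it below -/
import Mathlib

section
/- Let X be a nonnegative random variable with a regularly varying tail with index α > 0 and let s > α. Then lim_{x→∞} E[X^s · 1{X ≤ x}] / (x^s · P(X > x)) = α/(s − α). -/
open MeasureTheory Filter

open Set in
private lemma karamata_iterate {G : ℝ → ℝ} (hGnn : ∀ y, 0 ≤ G y)
    {β x₀ : ℝ} (hx₀ : 1 ≤ x₀)
    (hdbl : ∀ x : ℝ, x₀ ≤ x → G (x / 2) ≤ 2 ^ β * G x) :
    ∀ (k : ℕ) (x : ℝ), x₀ * 2 ^ k ≤ x → G (x / 2 ^ k) ≤ ((2:ℝ) ^ β) ^ k * G x := by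
  intro k
  induction k with
  | zero => intro x hx; simp
  | succ k ih =>
    intro x hx
    rw [pow_succ] at hx
    have hx₀0 : (0:ℝ) < x₀ := by linarith
    have hpk : (0:ℝ) < 2 ^ k := by positivity
    have h1 : x₀ * 2 ^ k ≤ x / 2 := by
      rw [le_div_iff₀ (by norm_num : (0:ℝ) < 2)]
      nlinarith
    have h2 := ih (x / 2) h1
    have h3 : x₀ ≤ x := by nlinarith [one_le_pow₀ (by norm_num : (1:ℝ) ≤ 2) (n := k)]
    have h4 := hdbl x h3
    have e : x / 2 ^ (k + 1) = x / 2 / 2 ^ k := by rw [pow_succ]; ring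
    rw [e]
    have hb : (0:ℝ) ≤ ((2:ℝ) ^ β) ^ k := by positivity
    calc G (x / 2 / 2 ^ k) ≤ ((2:ℝ) ^ β) ^ k * G (x / 2) := h2
      _ ≤ ((2:ℝ) ^ β) ^ k * (2 ^ β * G x) := by
          exact mul_le_mul_of_nonneg_left h4 hb
      _ = ((2:ℝ) ^ β) ^ (k + 1) * G x := by ring


private lemma karamata_potter {G : ℝ → ℝ} (hanti : Antitone G) (hGnn : ∀ y, 0 ≤ G y)
    {β x₀ : ℝ} (hβ : 0 < β) (hx₀ : 1 ≤ x₀)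
    (hdbl : ∀ x : ℝ, x₀ ≤ x → G (x / 2) ≤ 2 ^ β * G x) :
    ∀ x v : ℝ, 0 < v → v ≤ 1 → 2 * x₀ ≤ v * x →
      G (v * x) ≤ 2 ^ β * v ^ (-β) * G x := by
  intro x v hv hv1 hvx
  have hx0 : (0:ℝ) < x := by nlinarith
  set k := ⌊Real.logb 2 (1/v)⌋₊ with hkdef
  have h1v : (1:ℝ) ≤ 1/v := by rw [le_div_iff₀ hv]; linarith
  have hlogb0 : 0 ≤ Real.logb 2 (1/v) := Real.logb_nonneg one_lt_two h1v
  -- upper bound : 1/v < 2^(k+1)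
  have hup : Real.logb 2 (1/v) < (k:ℝ) + 1 := by
    have h := Nat.lt_floor_add_one (Real.logb 2 (1/v)); push_cast at h ⊢; exact h
  have h2k : (1:ℝ)/v < 2 ^ ((k:ℝ)+1) := by
    have := (Real.logb_lt_iff_lt_rpow one_lt_two (by positivity)).mp hup
    exact this
  have h2k' : (1:ℝ)/v < 2 ^ (k+1 : ℕ) := by
    rw [← Real.rpow_natCast 2 (k+1)]
    convert h2k using 2
    push_cast; ring
  -- lower bound : 2^k ≤ 1/v
  have hk2 : (2:ℝ) ^ (k : ℕ) ≤ 1/v := by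
    rw [← Real.rpow_natCast 2 k]
    calc (2:ℝ) ^ (k:ℝ) ≤ 2 ^ Real.logb 2 (1/v) :=
          Real.rpow_le_rpow_of_exponent_le one_le_two (Nat.floor_le hlogb0)
      _ = 1/v := Real.rpow_logb two_pos (by norm_num) (by positivity)
  have hpk : (0:ℝ) < 2 ^ (k+1 : ℕ) := by positivity
  have hvlow : x / 2 ^ (k+1:ℕ) ≤ v * x := by
    rw [div_le_iff₀ hpk]
    have h1 : 1 < v * 2 ^ (k+1:ℕ) := by
      rw [div_lt_iff₀ hv] at h2k'
      nlinarith
    nlinarith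
  have hcond : x₀ * 2 ^ (k+1:ℕ) ≤ x := by
    have e1 : (2:ℝ) ^ (k+1:ℕ) ≤ 2 * (1/v) := by
      rw [pow_succ]; nlinarith
    have e2 : 2 * x₀ / v ≤ x := by
      rw [div_le_iff₀ hv]; nlinarith
    have hx₀0 : (0:ℝ) < x₀ := by linarith
    have : x₀ * 2 ^ (k+1:ℕ) ≤ x₀ * (2 * (1/v)) := by nlinarith
    calc x₀ * 2 ^ (k+1:ℕ) ≤ x₀ * (2 * (1/v)) := this
      _ = 2 * x₀ / v := by ring
      _ ≤ x := e2
  have hiter := karamata_iterate hGnn hx₀ hdbl (k+1) x hcond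
  have hmono : G (v * x) ≤ G (x / 2 ^ (k+1:ℕ)) := hanti hvlow
  have hpow : ((2:ℝ) ^ β) ^ (k+1:ℕ) ≤ 2 ^ β * v ^ (-β) := by
    have h2v : (2:ℝ) ^ (k+1:ℕ) ≤ 2 / v := by
      rw [pow_succ]
      have : (2:ℝ)/v = 2 * (1/v) := by ring
      rw [this]; nlinarith
    have e : ((2:ℝ) ^ β) ^ (k+1:ℕ) = ((2:ℝ) ^ (k+1:ℕ)) ^ β := by
      rw [← Real.rpow_natCast ((2:ℝ) ^ β) (k+1), ← Real.rpow_natCast 2 (k+1),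
        ← Real.rpow_mul (by norm_num), ← Real.rpow_mul (by norm_num), mul_comm]
    rw [e]
    calc ((2:ℝ) ^ (k+1:ℕ)) ^ β ≤ (2/v) ^ β :=
          Real.rpow_le_rpow (by positivity) h2v hβ.le
      _ = 2 ^ β * v ^ (-β) := by
          rw [Real.div_rpow (by norm_num) hv.le, Real.rpow_neg hv.le, div_eq_mul_inv]
  calc G (v * x) ≤ G (x / 2 ^ (k+1:ℕ)) := hmono
    _ ≤ ((2:ℝ) ^ β) ^ (k+1:ℕ) * G x := hiter
    _ ≤ 2 ^ β * v ^ (-β) * G x := mul_le_mul_of_nonneg_right hpow (hGnn x)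


private lemma karamata_growth {G : ℝ → ℝ} (hanti : Antitone G) (hGnn : ∀ y, 0 ≤ G y)
    {β γ x₁ : ℝ} (hβ : 0 < β) (hβγ : β < γ) (hx₁ : 1 ≤ x₁) (hGx₁ : 0 < G x₁)
    (hdbl : ∀ x : ℝ, x₁ ≤ x → 2 ^ (-β) * G x ≤ G (2 * x)) :
    Tendsto (fun x : ℝ => x ^ γ * G x) atTop atTop := by
  have hγ : 0 < γ := hβ.trans hβγ
  have hx₁0 : (0:ℝ) < x₁ := by linarith
  have key : ∀ k : ℕ, ((2:ℝ) ^ (-β)) ^ k * G x₁ ≤ G (2 ^ k * x₁) := by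
    intro k
    induction k with
    | zero => simp
    | succ k ih =>
      have hxk : x₁ ≤ 2 ^ k * x₁ := by
        nlinarith [one_le_pow₀ (by norm_num : (1:ℝ) ≤ 2) (n := k)]
      have hnb : (0:ℝ) ≤ (2:ℝ) ^ (-β) := by positivity
      calc ((2:ℝ) ^ (-β)) ^ (k+1) * G x₁ = 2 ^ (-β) * (((2:ℝ) ^ (-β)) ^ k * G x₁) := by ring
        _ ≤ 2 ^ (-β) * G (2 ^ k * x₁) := mul_le_mul_of_nonneg_left ih hnb
        _ ≤ G (2 * (2 ^ k * x₁)) := hdbl _ hxk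
        _ = G (2 ^ (k+1) * x₁) := by rw [pow_succ]; ring_nf
  set c : ℝ := x₁ ^ γ * 2 ^ (-β) * G x₁ with hc
  have hcpos : 0 < c := by positivity
  have lower : ∀ x : ℝ, x₁ ≤ x →
      c * ((2:ℝ) ^ (γ - β)) ^ (⌊Real.logb 2 (x/x₁)⌋₊) ≤ x ^ γ * G x := by
    intro x hx
    have hx0 : (0:ℝ) < x := by linarith
    have hr1 : (1:ℝ) ≤ x / x₁ := (one_le_div hx₁0).mpr hx
    set k := ⌊Real.logb 2 (x/x₁)⌋₊ with hkdef
    have hlog0 : 0 ≤ Real.logb 2 (x/x₁) := Real.logb_nonneg one_lt_two hr1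
    have hklow : (2:ℝ) ^ (k:ℕ) ≤ x / x₁ := by
      rw [← Real.rpow_natCast 2 k]
      calc (2:ℝ) ^ (k:ℝ) ≤ 2 ^ Real.logb 2 (x/x₁) :=
            Real.rpow_le_rpow_of_exponent_le one_le_two (Nat.floor_le hlog0)
        _ = x / x₁ := Real.rpow_logb two_pos (by norm_num) (by positivity)
    have hkup : x / x₁ < 2 ^ (k+1:ℕ) := by
      rw [← Real.rpow_natCast 2 (k+1)]
      have h := Nat.lt_floor_add_one (Real.logb 2 (x/x₁))
      have h' : Real.logb 2 (x/x₁) < ((k+1 : ℕ) : ℝ) := by push_cast; push_cast at h; exact h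
      exact (Real.logb_lt_iff_lt_rpow one_lt_two (by positivity)).mp h'
    have h1 : (2:ℝ) ^ (k:ℕ) * x₁ ≤ x := by
      rw [← le_div_iff₀ hx₁0]; exact hklow
    have h2 : x ≤ 2 ^ (k+1:ℕ) * x₁ := by
      rw [← div_le_iff₀ hx₁0]; exact hkup.le
    have hG1 : G (2 ^ (k+1:ℕ) * x₁) ≤ G x := hanti h2
    have hGk := key (k+1)
    have hxγ : ((2:ℝ) ^ (k:ℕ) * x₁) ^ γ ≤ x ^ γ :=
      Real.rpow_le_rpow (by positivity) h1 hγ.le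
    have e1 : ((2:ℝ) ^ (γ-β)) ^ (k:ℕ) = (2:ℝ) ^ ((γ-β) * (k:ℝ)) := by
      rw [← Real.rpow_natCast ((2:ℝ) ^ (γ-β)) k, ← Real.rpow_mul (by norm_num)]
    have e2 : ((2:ℝ) ^ (-β)) ^ (k+1:ℕ) = (2:ℝ) ^ ((-β) * ((k:ℝ)+1)) := by
      rw [← Real.rpow_natCast ((2:ℝ) ^ (-β)) (k+1), ← Real.rpow_mul (by norm_num)]
      push_cast; ring_nf
    have e3 : ((2:ℝ) ^ (k:ℕ) * x₁) ^ γ = (2:ℝ) ^ ((k:ℝ) * γ) * x₁ ^ γ := by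
      rw [Real.mul_rpow (by positivity) hx₁0.le, ← Real.rpow_natCast 2 k,
        ← Real.rpow_mul (by norm_num)]
    have ealg : c * ((2:ℝ) ^ (γ-β)) ^ (k:ℕ)
        = ((2:ℝ) ^ (k:ℕ) * x₁) ^ γ * (((2:ℝ) ^ (-β)) ^ (k+1:ℕ) * G x₁) := by
      rw [e1, e2, e3, hc]
      have : (2:ℝ) ^ ((γ-β) * (k:ℝ)) * 2 ^ (-β)
          = (2:ℝ) ^ ((k:ℝ) * γ) * 2 ^ ((-β) * ((k:ℝ)+1)) := by
        rw [← Real.rpow_add two_pos, ← Real.rpow_add two_pos]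
        congr 1; ring
      linear_combination (x₁ ^ γ * G x₁) * this
    calc c * ((2:ℝ) ^ (γ-β)) ^ (k:ℕ)
        = ((2:ℝ) ^ (k:ℕ) * x₁) ^ γ * (((2:ℝ) ^ (-β)) ^ (k+1:ℕ) * G x₁) := ealg
      _ ≤ ((2:ℝ) ^ (k:ℕ) * x₁) ^ γ * G (2 ^ (k+1:ℕ) * x₁) :=
          mul_le_mul_of_nonneg_left hGk (by positivity)
      _ ≤ x ^ γ * G x :=
          mul_le_mul hxγ hG1 (hGnn _) (Real.rpow_nonneg hx0.le _)
  have h2gt : (1:ℝ) < 2 ^ (γ - β) :=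
    (Real.one_lt_rpow_iff_of_pos two_pos).mpr (Or.inl ⟨one_lt_two, sub_pos.mpr hβγ⟩)
  have hlogtend : Tendsto (fun x : ℝ => Real.logb 2 (x / x₁)) atTop atTop :=
    (Real.tendsto_logb_atTop one_lt_two).comp (tendsto_id.atTop_div_const hx₁0)
  have htend : Tendsto (fun x : ℝ => c * ((2:ℝ) ^ (γ-β)) ^ (⌊Real.logb 2 (x/x₁)⌋₊)) atTop atTop := by
    apply Tendsto.const_mul_atTop hcpos
    exact (tendsto_pow_atTop_atTop_of_one_lt h2gt).comp (tendsto_nat_floor_atTop.comp hlogtend)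
  refine tendsto_atTop_mono' atTop ?_ htend
  filter_upwards [eventually_ge_atTop x₁] with x hx
  exact lower x hx


private lemma integrableOn_rpow_Ioo {r : ℝ} (hr : -1 < r) :
    IntegrableOn (fun v : ℝ => v ^ r) (Set.Ioo (0:ℝ) 1) := by
  have h := intervalIntegral.intervalIntegrable_rpow' (a := 0) (b := 1) hr
  rw [intervalIntegrable_iff_integrableOn_Ioc_of_le zero_le_one] at h
  exact h.mono_set Set.Ioo_subset_Ioc_self

private lemma integral_rpow_Ioo {r : ℝ} (hr : -1 < r) :
    ∫ v in Set.Ioo (0:ℝ) 1, v ^ r = 1 / (r + 1) := by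
  rw [← integral_Ioc_eq_integral_Ioo, ← intervalIntegral.integral_of_le zero_le_one,
    integral_rpow (Or.inl hr), Real.one_rpow, Real.zero_rpow (by linarith)]
  norm_num


private lemma karamata_main {G : ℝ → ℝ} (hanti : Antitone G) (hGnn : ∀ y, 0 ≤ G y)
    (hG1 : ∀ y, G y ≤ 1) (hGpos : ∀ y : ℝ, 0 < y → 0 < G y) {α s : ℝ}
    (hα : 0 < α) (hs : α < s)
    (hrvG : ∀ t : ℝ, 0 < t → Tendsto (fun x => G (t*x) / G x) atTop (nhds (t ^ (-α)))) :
    Tendsto (fun x : ℝ => ∫ v in Set.Ioo (0:ℝ) 1, v ^ (s-1) * (G (v*x) / G x))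
      atTop (nhds (1/(s-α))) := by
  set β := (α+s)/2 with hβdef
  set γ := (β+s)/2 with hγdef
  have hαβ : α < β := by rw [hβdef]; linarith
  have hβs : β < s := by rw [hβdef]; linarith
  have hβ0 : 0 < β := hα.trans hαβ
  have hβγ : β < γ := by rw [hγdef]; linarith
  have hγs : γ < s := by rw [hγdef]; linarith
  have hγ0 : 0 < γ := hβ0.trans hβγ
  -- upper doubling bound
  obtain ⟨x₀, hx₀1, hdblU⟩ : ∃ x₀ : ℝ, 1 ≤ x₀ ∧ ∀ x : ℝ, x₀ ≤ x → G (x/2) ≤ 2 ^ β * G x := by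
    have hval : ((1:ℝ)/2) ^ (-α) < 2 ^ β := by
      rw [one_div, Real.inv_rpow (by norm_num), ← Real.rpow_neg (by norm_num), neg_neg]
      exact (Real.rpow_lt_rpow_left_iff one_lt_two).mpr hαβ
    have hev := (hrvG (1/2) (by norm_num)).eventually_lt_const hval
    rw [eventually_atTop] at hev
    obtain ⟨a₀, ha₀⟩ := hev
    refine ⟨max a₀ 1, le_max_right _ _, fun x hx => ?_⟩
    have hx1 : (1:ℝ) ≤ x := le_trans (le_max_right _ _) hx
    have h := ha₀ x (le_trans (le_max_left _ _) hx)
    have hGx : 0 < G x := hGpos x (by linarith)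
    have h2 : G ((1/2)*x) ≤ 2 ^ β * G x := ((div_lt_iff₀ hGx).mp h).le
    have e : (1/2:ℝ)*x = x/2 := by ring
    rwa [e] at h2
  -- lower doubling bound
  obtain ⟨x₁, hx₁1, hdblL⟩ : ∃ x₁ : ℝ, 1 ≤ x₁ ∧ ∀ x : ℝ, x₁ ≤ x → 2 ^ (-β) * G x ≤ G (2*x) := by
    have hval : (2:ℝ) ^ (-β) < 2 ^ (-α) :=
      (Real.rpow_lt_rpow_left_iff one_lt_two).mpr (by linarith)
    have hev := (hrvG 2 two_pos).eventually_const_lt hval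
    rw [eventually_atTop] at hev
    obtain ⟨a₁, ha₁⟩ := hev
    refine ⟨max a₁ 1, le_max_right _ _, fun x hx => ?_⟩
    have hx1 : (1:ℝ) ≤ x := le_trans (le_max_right _ _) hx
    have h := ha₁ x (le_trans (le_max_left _ _) hx)
    have hGx : 0 < G x := hGpos x (by linarith)
    exact ((lt_div_iff₀ hGx).mp h).le
  have hgrow := karamata_growth hanti hGnn hβ0 hβγ hx₁1 (hGpos x₁ (by linarith)) hdblL
  have hev1 := hgrow.eventually_ge_atTop 1
  rw [eventually_atTop] at hev1
  obtain ⟨x₂, hx₂⟩ := hev1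
  set bound : ℝ → ℝ := fun v => 2 ^ β * v ^ (s-1-β) + (2*x₀) ^ γ * v ^ (s-1-γ) with hbd
  have hmeas : ∀ᶠ (x:ℝ) in atTop,
      AEStronglyMeasurable (fun v => v ^ (s-1) * (G (v*x)/G x))
        (volume.restrict (Set.Ioo (0:ℝ) 1)) := by
    refine Eventually.of_forall (fun x => ?_)
    exact (((measurable_id.pow measurable_const).mul
      ((hanti.measurable.comp (measurable_id.mul_const x)).div_const (G x))).aestronglyMeasurable).restrict
  have hbdd : ∀ᶠ (x:ℝ) in atTop, ∀ᵐ v ∂(volume.restrict (Set.Ioo (0:ℝ) 1)),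
      ‖v ^ (s-1) * (G (v*x)/G x)‖ ≤ bound v := by
    rw [eventually_atTop]
    refine ⟨max (2*x₀) (max x₂ 1), fun x hx => ?_⟩
    have hx2x₀ : 2*x₀ ≤ x := le_trans (le_max_left _ _) hx
    have hxx₂ : x₂ ≤ x := le_trans ((le_max_left _ _).trans (le_max_right _ _)) hx
    have hx1 : (1:ℝ) ≤ x := le_trans ((le_max_right _ _).trans (le_max_right _ _)) hx
    have hx0 : (0:ℝ) < x := by linarith
    have hGx : 0 < G x := hGpos x hx0
    filter_upwards [ae_restrict_mem measurableSet_Ioo] with v hv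
    obtain ⟨hv0, hv1⟩ := hv
    have hnn : 0 ≤ v ^ (s-1) * (G (v*x)/G x) :=
      mul_nonneg (Real.rpow_nonneg hv0.le _) (div_nonneg (hGnn _) hGx.le)
    rw [Real.norm_of_nonneg hnn]
    by_cases hcase : 2*x₀ ≤ v*x
    · have hp := karamata_potter hanti hGnn hβ0 hx₀1 hdblU x v hv0 hv1.le hcase
      have h1 : v ^ (s-1) * (G (v*x)/G x) ≤ v ^ (s-1) * (2 ^ β * v ^ (-β)) := by
        refine mul_le_mul_of_nonneg_left ?_ (Real.rpow_nonneg hv0.le _)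
        rw [div_le_iff₀ hGx]
        exact hp
      have h2 : v ^ (s-1) * ((2:ℝ) ^ β * v ^ (-β)) = 2 ^ β * v ^ (s-1-β) := by
        rw [show s-1-β = (s-1)+(-β) by ring, Real.rpow_add hv0]; ring
      rw [h2] at h1
      refine h1.trans (le_add_of_nonneg_right ?_)
      have h3 : (0:ℝ) ≤ (2*x₀) ^ γ := Real.rpow_nonneg (by linarith) _
      exact mul_nonneg h3 (Real.rpow_nonneg hv0.le _)
    · push_neg at hcase
      have hGdiv : G (v*x)/G x ≤ x ^ γ := by
        rw [div_le_iff₀ hGx]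
        calc G (v*x) ≤ 1 := hG1 _
          _ ≤ x ^ γ * G x := hx₂ x hxx₂
      have hxbound : x ^ γ ≤ (2*x₀) ^ γ * v ^ (-γ) := by
        have hxlt : x ≤ 2*x₀/v := by
          rw [le_div_iff₀ hv0]; nlinarith
        calc x ^ γ ≤ (2*x₀/v) ^ γ := Real.rpow_le_rpow hx0.le hxlt hγ0.le
          _ = (2*x₀) ^ γ * v ^ (-γ) := by
            rw [Real.div_rpow (by linarith) hv0.le, Real.rpow_neg hv0.le, div_eq_mul_inv]
      have h1 : v ^ (s-1) * (G (v*x)/G x) ≤ v ^ (s-1) * ((2*x₀) ^ γ * v ^ (-γ)) :=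
        mul_le_mul_of_nonneg_left (hGdiv.trans hxbound) (Real.rpow_nonneg hv0.le _)
      have h2 : v ^ (s-1) * ((2*x₀) ^ γ * v ^ (-γ)) = (2*x₀) ^ γ * v ^ (s-1-γ) := by
        rw [show s-1-γ = (s-1)+(-γ) by ring, Real.rpow_add hv0]; ring
      rw [h2] at h1
      refine h1.trans (le_add_of_nonneg_left ?_)
      exact mul_nonneg (Real.rpow_nonneg (by norm_num) _) (Real.rpow_nonneg hv0.le _)
  have hint : Integrable bound (volume.restrict (Set.Ioo (0:ℝ) 1)) := by
    have i1 : IntegrableOn (fun v:ℝ => v ^ (s-1-β)) (Set.Ioo (0:ℝ) 1) :=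
      integrableOn_rpow_Ioo (by linarith)
    have i2 : IntegrableOn (fun v:ℝ => v ^ (s-1-γ)) (Set.Ioo (0:ℝ) 1) :=
      integrableOn_rpow_Ioo (by linarith)
    exact (i1.const_mul _).add (i2.const_mul _)
  have hptwise : ∀ᵐ v ∂(volume.restrict (Set.Ioo (0:ℝ) 1)),
      Tendsto (fun x => v ^ (s-1) * (G (v*x)/G x)) atTop (nhds (v ^ (s-1) * v ^ (-α))) := by
    filter_upwards [ae_restrict_mem measurableSet_Ioo] with v hv
    exact (hrvG v hv.1).const_mul _
  have hdct := tendsto_integral_filter_of_dominated_convergence bound hmeas hbdd hint hptwise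
  have hval : ∫ v in Set.Ioo (0:ℝ) 1, v ^ (s-1) * v ^ (-α) = 1/(s-α) := by
    have e : Set.EqOn (fun v : ℝ => v ^ (s-1) * v ^ (-α)) (fun v : ℝ => v ^ (s-1-α))
        (Set.Ioo (0:ℝ) 1) := by
      intro v hv
      show v ^ (s-1) * v ^ (-α) = v ^ (s-1-α)
      rw [show s-1-α = (s-1)+(-α) by ring, Real.rpow_add hv.1]
    rw [setIntegral_congr_fun measurableSet_Ioo e, integral_rpow_Ioo (by linarith)]
    congr 1
    ring
  rwa [hval] at hdct


private lemma karamata_numerator {Ω : Type*} [MeasurableSpace Ω] (P : Measure Ω)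
    [IsProbabilityMeasure P] (X : Ω → ℝ) (hXmeas : Measurable X)
    (hXnonneg : ∀ ω, 0 ≤ X ω) {s : ℝ} (hs0 : 0 < s) (G : ℝ → ℝ)
    (hanti : Antitone G) (hGnn : ∀ y, 0 ≤ G y) (hG1 : ∀ y, G y ≤ 1)
    (hlink : ∀ y, G y = (P {ω | X ω > y}).toReal) {x : ℝ} (hx : 1 ≤ x) :
    ∫ ω, (if X ω ≤ x then X ω ^ s else 0) ∂P
      = s * x ^ s * (∫ v in Set.Ioo (0:ℝ) 1, v ^ (s-1) * G (v*x)) - x ^ s * G x := by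
  have hx0 : (0:ℝ) < x := by linarith
  have hxs0 : (0:ℝ) < x ^ s := Real.rpow_pos_of_pos hx0 s
  set f : Ω → ℝ := fun ω => if X ω ≤ x then X ω ^ s else 0 with hf
  have hfnn : ∀ ω, 0 ≤ f ω := by
    intro ω; rw [hf]
    by_cases h : X ω ≤ x <;> simp [h, Real.rpow_nonneg (hXnonneg ω)]
  have hfmeas : Measurable f :=
    Measurable.ite (measurableSet_le hXmeas measurable_const)
      (hXmeas.pow measurable_const) measurable_const
  have hfle : ∀ ω, f ω ≤ x ^ s := by
    intro ω; rw [hf]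
    by_cases h : X ω ≤ x
    · simpa [h] using Real.rpow_le_rpow (hXnonneg ω) h hs0.le
    · simpa [h] using hxs0.le
  have hfint : Integrable f P := by
    refine (integrable_const (x ^ s)).mono' hfmeas.aestronglyMeasurable ?_
    refine ae_of_all _ (fun ω => ?_)
    rw [Real.norm_of_nonneg (hfnn ω)]
    exact hfle ω
  have h1 : ∫ ω, f ω ∂P = ∫ t in Set.Ioi (0:ℝ), (P {a | t < f a}).toReal :=
    hfint.integral_eq_integral_meas_lt (ae_of_all _ hfnn)
  have h2 : ∫ t in Set.Ioi (0:ℝ), (P {a | t < f a}).toReal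
      = ∫ t in Set.Ioo (0:ℝ) (x ^ s), (P {a | t < f a}).toReal := by
    refine setIntegral_eq_of_subset_of_ae_diff_eq_zero
      measurableSet_Ioi.nullMeasurableSet Set.Ioo_subset_Ioi_self ?_
    refine ae_of_all _ (fun t ht => ?_)
    obtain ⟨ht0, hno⟩ := ht
    have hts : x ^ s ≤ t := by
      by_contra hc
      push_neg at hc
      exact hno ⟨ht0, hc⟩
    have hempty : {a | t < f a} = ∅ := by
      ext a
      simp only [Set.mem_setOf_eq, Set.mem_empty_iff_false, iff_false, not_lt]
      exact (hfle a).trans hts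
    simp [hempty]
  have h3 : ∀ t ∈ Set.Ioo (0:ℝ) (x ^ s),
      (P {a | t < f a}).toReal = G (t ^ s⁻¹) - G x := by
    intro t ht
    obtain ⟨ht0, htxs⟩ := ht
    have htr : t ^ s⁻¹ < x := by
      have h := Real.rpow_lt_rpow ht0.le htxs (inv_pos.mpr hs0)
      rwa [← Real.rpow_mul hx0.le, mul_inv_cancel₀ hs0.ne', Real.rpow_one] at h
    have hseteq : {a | t < f a} = {ω | X ω > t ^ s⁻¹} \ {ω | X ω > x} := by
      ext a
      simp only [Set.mem_setOf_eq, Set.mem_diff, hf]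
      constructor
      · intro h
        by_cases hc : X a ≤ x
        · rw [if_pos hc] at h
          refine ⟨?_, not_lt.mpr hc⟩
          have h' := Real.rpow_lt_rpow ht0.le h (inv_pos.mpr hs0)
          rwa [← Real.rpow_mul (hXnonneg a), mul_inv_cancel₀ hs0.ne', Real.rpow_one] at h'
        · rw [if_neg hc] at h
          linarith
      · rintro ⟨h1', h2'⟩
        have hc : X a ≤ x := not_lt.mp h2'
        rw [if_pos hc]
        have h' := Real.rpow_lt_rpow (Real.rpow_nonneg ht0.le _) h1' hs0
        rwa [← Real.rpow_mul ht0.le, inv_mul_cancel₀ hs0.ne', Real.rpow_one] at h'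
    have hsub : {ω | X ω > x} ⊆ {ω | X ω > t ^ s⁻¹} :=
      fun ω hω => lt_trans htr hω
    have hmeasB : NullMeasurableSet {ω | X ω > x} P :=
      (measurableSet_lt measurable_const hXmeas).nullMeasurableSet
    rw [hseteq, measure_diff hsub hmeasB (measure_ne_top _ _),
      ENNReal.toReal_sub_of_le (measure_mono hsub) (measure_ne_top _ _),
      hlink, hlink]
  have h4 : ∫ t in Set.Ioo (0:ℝ) (x ^ s), (P {a | t < f a}).toReal
      = ∫ t in Set.Ioo (0:ℝ) (x ^ s), (G (t ^ s⁻¹) - G x) :=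
    setIntegral_congr_fun measurableSet_Ioo h3
  -- change of variables t = (v*x)^s
  have himg : (fun v : ℝ => (v*x) ^ s) '' Set.Ioo 0 1 = Set.Ioo 0 (x ^ s) := by
    ext t
    simp only [Set.mem_image, Set.mem_Ioo]
    constructor
    · rintro ⟨v, ⟨hv0, hv1⟩, rfl⟩
      refine ⟨Real.rpow_pos_of_pos (by positivity) s, ?_⟩
      exact Real.rpow_lt_rpow (by positivity) (by nlinarith) hs0
    · rintro ⟨ht0, htx⟩
      have htr : t ^ s⁻¹ < x := by
        have h := Real.rpow_lt_rpow ht0.le htx (inv_pos.mpr hs0)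
        rwa [← Real.rpow_mul hx0.le, mul_inv_cancel₀ hs0.ne', Real.rpow_one] at h
      refine ⟨t ^ s⁻¹ / x, ⟨by positivity, by rwa [div_lt_one hx0]⟩, ?_⟩
      rw [div_mul_cancel₀ _ hx0.ne', ← Real.rpow_mul ht0.le, inv_mul_cancel₀ hs0.ne',
        Real.rpow_one]
  have hderiv : ∀ v ∈ Set.Ioo (0:ℝ) 1,
      HasDerivWithinAt (fun v : ℝ => (v*x) ^ s) (s * (v*x) ^ (s-1) * x) (Set.Ioo 0 1) v := by
    intro v hv
    have hvx : (0:ℝ) < v * x := mul_pos hv.1 hx0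
    have h := (Real.hasDerivAt_rpow_const (x := v*x) (p := s) (Or.inl hvx.ne')).comp v
      ((hasDerivAt_id v).mul_const x)
    simpa [Function.comp_def, mul_comm, mul_assoc] using h.hasDerivWithinAt
  have hinj : Set.InjOn (fun v : ℝ => (v*x) ^ s) (Set.Ioo 0 1) := by
    have hsm : ∀ u w : ℝ, u ∈ Set.Ioo (0:ℝ) 1 → w ∈ Set.Ioo (0:ℝ) 1 → u < w →
        (u*x) ^ s < (w*x) ^ s := by
      intro u w hu hw huw
      exact Real.rpow_lt_rpow (mul_pos hu.1 hx0).le (mul_lt_mul_of_pos_right huw hx0) hs0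
    intro a ha b hb hab
    rcases lt_trichotomy a b with h|h|h
    · exact absurd hab (ne_of_lt (hsm a b ha hb h))
    · exact h
    · exact absurd hab.symm (ne_of_lt (hsm b a hb ha h))
  have h5 := integral_image_eq_integral_abs_deriv_smul measurableSet_Ioo hderiv hinj
    (fun t => G (t ^ s⁻¹) - G x)
  rw [himg] at h5
  have h6 : ∀ v ∈ Set.Ioo (0:ℝ) 1,
      |s * (v*x) ^ (s-1) * x| • (G (((v*x) ^ s) ^ s⁻¹) - G x)
        = s * x ^ s * (v ^ (s-1) * (G (v*x) - G x)) := by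
    intro v hv
    obtain ⟨hv0, hv1⟩ := hv
    have hvx : (0:ℝ) < v * x := mul_pos hv0 hx0
    rw [smul_eq_mul, abs_of_pos (by positivity), ← Real.rpow_mul hvx.le,
      mul_inv_cancel₀ hs0.ne', Real.rpow_one, Real.mul_rpow hv0.le hx0.le]
    have e : x ^ (s-1) * x = x ^ s := by
      rw [← Real.rpow_add_one hx0.ne' (s-1)]
      norm_num
    rw [← e]
    ring
  have h7 : ∫ v in Set.Ioo (0:ℝ) 1,
      |s * (v*x) ^ (s-1) * x| • (G (((v*x) ^ s) ^ s⁻¹) - G x)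
        = ∫ v in Set.Ioo (0:ℝ) 1, s * x ^ s * (v ^ (s-1) * (G (v*x) - G x)) :=
    setIntegral_congr_fun measurableSet_Ioo h6
  have hbase : IntegrableOn (fun v : ℝ => v ^ (s-1)) (Set.Ioo (0:ℝ) 1) :=
    integrableOn_rpow_Ioo (by linarith)
  have hint1 : IntegrableOn (fun v : ℝ => v ^ (s-1) * G (v*x)) (Set.Ioo (0:ℝ) 1) := by
    refine hbase.mono' ?_ ?_
    · exact (((measurable_id.pow measurable_const).mul
        (hanti.measurable.comp (measurable_id.mul_const x))).aestronglyMeasurable).restrict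
    · filter_upwards [ae_restrict_mem measurableSet_Ioo] with v hv
      rw [Real.norm_of_nonneg (mul_nonneg (Real.rpow_nonneg hv.1.le _) (hGnn _))]
      nlinarith [Real.rpow_nonneg hv.1.le (s-1), hGnn (v*x), hG1 (v*x)]
  have hint2 : IntegrableOn (fun v : ℝ => v ^ (s-1) * G x) (Set.Ioo (0:ℝ) 1) :=
    hbase.mul_const _
  calc ∫ ω, f ω ∂P
      = ∫ t in Set.Ioi (0:ℝ), (P {a | t < f a}).toReal := h1
    _ = ∫ t in Set.Ioo (0:ℝ) (x ^ s), (P {a | t < f a}).toReal := h2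
    _ = ∫ t in Set.Ioo (0:ℝ) (x ^ s), (G (t ^ s⁻¹) - G x) := h4
    _ = ∫ v in Set.Ioo (0:ℝ) 1,
          |s * (v*x) ^ (s-1) * x| • (G (((v*x) ^ s) ^ s⁻¹) - G x) := h5
    _ = ∫ v in Set.Ioo (0:ℝ) 1, s * x ^ s * (v ^ (s-1) * (G (v*x) - G x)) := h7
    _ = s * x ^ s * ∫ v in Set.Ioo (0:ℝ) 1, (v ^ (s-1) * (G (v*x) - G x)) := by
        rw [integral_const_mul]
    _ = s * x ^ s * ((∫ v in Set.Ioo (0:ℝ) 1, v ^ (s-1) * G (v*x))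
          - ∫ v in Set.Ioo (0:ℝ) 1, v ^ (s-1) * G x) := by
        congr 1
        rw [← integral_sub hint1 hint2]
        refine setIntegral_congr_fun measurableSet_Ioo (fun v hv => ?_)
        ring
    _ = s * x ^ s * (∫ v in Set.Ioo (0:ℝ) 1, v ^ (s-1) * G (v*x)) - x ^ s * G x := by
        have e2 : ∫ v in Set.Ioo (0:ℝ) 1, v ^ (s-1) * G x
            = (1/s) * G x := by
          rw [integral_mul_const, integral_rpow_Ioo (by linarith)]
          norm_num
        rw [e2]
        generalize (∫ v in Set.Ioo (0:ℝ) 1, v ^ (s-1) * G (v*x)) = I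
        field_simp


private lemma karamata_final {G : ℝ → ℝ} (hanti : Antitone G) (hGnn : ∀ y, 0 ≤ G y)
    (hG1 : ∀ y, G y ≤ 1) (hGpos : ∀ y : ℝ, 0 < y → 0 < G y) {α s : ℝ}
    (hα : 0 < α) (hs : α < s)
    (hrvG : ∀ t : ℝ, 0 < t → Tendsto (fun x => G (t*x) / G x) atTop (nhds (t ^ (-α))))
    (M : ℝ → ℝ)
    (hM : ∀ x : ℝ, 1 ≤ x → M x
      = s * x ^ s * (∫ v in Set.Ioo (0:ℝ) 1, v ^ (s-1) * G (v*x)) - x ^ s * G x) :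
    Tendsto (fun x : ℝ => M x / (x ^ s * G x)) atTop (nhds (α/(s-α))) := by
  have hmain := karamata_main hanti hGnn hG1 hGpos hα hs hrvG
  have hsα : (0:ℝ) < s - α := sub_pos.mpr hs
  have h2 : Tendsto (fun x : ℝ =>
      s * (∫ v in Set.Ioo (0:ℝ) 1, v ^ (s-1) * (G (v*x) / G x)) - 1)
      atTop (nhds (α/(s-α))) := by
    have h := (hmain.const_mul s).sub_const 1
    have e : s * (1/(s-α)) - 1 = α/(s-α) := by
      field_simp
      ring
    rwa [e] at h
  refine Tendsto.congr' ?_ h2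
  filter_upwards [eventually_ge_atTop (1:ℝ)] with x hx
  have hx0 : (0:ℝ) < x := by linarith
  have hGx : 0 < G x := hGpos x hx0
  have hxs : (0:ℝ) < x ^ s := Real.rpow_pos_of_pos hx0 s
  have hI : ∫ v in Set.Ioo (0:ℝ) 1, v ^ (s-1) * (G (v*x) / G x)
      = (∫ v in Set.Ioo (0:ℝ) 1, v ^ (s-1) * G (v*x)) / G x := by
    rw [← integral_div]
    refine setIntegral_congr_fun measurableSet_Ioo (fun v hv => ?_)
    exact (mul_div_assoc _ _ _).symm
  rw [hM x hx, hI]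
  generalize (∫ v in Set.Ioo (0:ℝ) 1, v ^ (s-1) * G (v*x)) = I
  field_simp

/-- **Karamata-type theorem for truncated moments.**
Let `X` be a nonnegative random variable with a regularly varying tail with index `α > 0`
and let `s > α`. Then `E[X^s 1{X ≤ x}] / (x^s P(X > x)) → α/(s-α)` as `x → ∞`. -/
theorem truncated_moment_karamata
    {Ω : Type*} [MeasurableSpace Ω] (P : Measure Ω) [IsProbabilityMeasure P]
    (X : Ω → ℝ) (hXmeas : Measurable X) (hXnonneg : ∀ ω, 0 ≤ X ω)
    (α : ℝ) (hα : 0 < α)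
    (htailpos : ∀ x : ℝ, 0 < x → 0 < P {ω | X ω > x})
    (hrv : ∀ t : ℝ, 0 < t →
      Tendsto (fun x : ℝ => (P {ω | X ω > t * x}).toReal / (P {ω | X ω > x}).toReal)
        atTop (nhds (t ^ (-α))))
    (s : ℝ) (hs : α < s) :
    Tendsto
      (fun x : ℝ =>
        (∫ ω, (if X ω ≤ x then X ω ^ s else 0) ∂P) / (x ^ s * (P {ω | X ω > x}).toReal))
      atTop (nhds (α / (s - α))) := by
  have hanti : Antitone (fun y : ℝ => (P {ω | X ω > y}).toReal) := fun a b hab =>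
    (ENNReal.toReal_le_toReal (measure_ne_top _ _) (measure_ne_top _ _)).mpr
      (measure_mono (fun ω hω => lt_of_le_of_lt hab hω))
  have hGnn : ∀ y : ℝ, 0 ≤ (P {ω | X ω > y}).toReal := fun y => ENNReal.toReal_nonneg
  have hG1 : ∀ y : ℝ, (P {ω | X ω > y}).toReal ≤ 1 := fun y => by
    simpa using ENNReal.toReal_mono ENNReal.one_ne_top prob_le_one
  have hGpos : ∀ y : ℝ, 0 < y → 0 < (P {ω | X ω > y}).toReal := fun y hy =>
    ENNReal.toReal_pos (htailpos y hy).ne' (measure_ne_top _ _)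
  exact karamata_final (G := fun y : ℝ => (P {ω | X ω > y}).toReal)
    hanti hGnn hG1 hGpos hα hs hrv
    (fun x => ∫ ω, (if X ω ≤ x then X ω ^ s else 0) ∂P)
    (fun x hx => karamata_numerator P X hXmeas hXnonneg (hα.trans hs)
      (fun y : ℝ => (P {ω | X ω > y}).toReal) hanti hGnn hG1 (fun y => rfl) hx)
end

section
/- Let (X_n)_{n≥1} be identically distributed nonnegative random variables such that X_1 has a regularly varying tail with index α > 0, and let (a_n) be a sequence of positive reals with n·P(X_1 > a_n) → 1. Then for every s > α, every ε > 0 and every δ > 0, limsup_{n→∞} P(a_n^{-1}·max_{1≤i≤n} X_i · 1{X_i < ε a_n} > δ) ≤ δ^{−s} · (α/(s−α)) · ε^{s−α}. -/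
open MeasureTheory Filter
open scoped ENNReal

lemma aux_rv_ineq {α s ε δ : ℝ} (hα : 0 < α) (hs : α < s) (hε : 0 < ε) (hδ : 0 < δ)
    (hδε : δ < ε) :
    δ ^ (-α) - ε ^ (-α) ≤ δ ^ (-s) * (α / (s - α)) * ε ^ (s - α) := by
  set u : ℝ := δ / ε with hu
  have hu0 : 0 < u := div_pos hδ hε
  have hu1 : u ≤ 1 := ((div_lt_one hε).2 hδε).le
  have hw1 : 1 ≤ u ^ (-α) :=
    Real.one_le_rpow_of_pos_of_le_one_of_nonpos hu0 hu1 (by linarith)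
  have hp1 : 1 ≤ s / α := (one_le_div hα).2 hs.le
  have hbern := one_add_mul_self_le_rpow_one_add (s := u ^ (-α) - 1) (by linarith) hp1
  have hwp : (1 + (u ^ (-α) - 1)) ^ (s / α) = u ^ (-s) := by
    rw [show 1 + (u ^ (-α) - 1) = u ^ (-α) by ring, ← Real.rpow_mul hu0.le]
    congr 1
    field_simp
  rw [hwp] at hbern
  have key : u ^ (-α) - 1 ≤ (α / (s - α)) * u ^ (-s) := by
    have h1 : (s / α) * (u ^ (-α) - 1) ≤ u ^ (-s) := by linarith
    have h2 : u ^ (-α) - 1 ≤ (α / s) * u ^ (-s) := by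
      rw [div_mul_eq_mul_div, le_div_iff₀ (by linarith)]
      calc (u ^ (-α) - 1) * s = α * ((s / α) * (u ^ (-α) - 1)) := by
            field_simp
        _ ≤ α * u ^ (-s) := mul_le_mul_of_nonneg_left h1 hα.le
    refine h2.trans ?_
    have := Real.rpow_pos_of_pos hu0 (-s)
    apply mul_le_mul_of_nonneg_right _ this.le
    apply div_le_div_of_nonneg_left hα.le (by linarith) (by linarith)
  have hεα : (0:ℝ) < ε ^ (-α) := Real.rpow_pos_of_pos hε _
  have huα : u ^ (-α) = δ ^ (-α) / ε ^ (-α) := by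
    rw [hu, Real.div_rpow hδ.le hε.le]
  have hus : u ^ (-s) = δ ^ (-s) / ε ^ (-s) := by
    rw [hu, Real.div_rpow hδ.le hε.le]
  have hmul := mul_le_mul_of_nonneg_left key hεα.le
  calc δ ^ (-α) - ε ^ (-α) = ε ^ (-α) * (u ^ (-α) - 1) := by
        rw [huα]; field_simp
    _ ≤ ε ^ (-α) * ((α / (s - α)) * u ^ (-s)) := hmul
    _ = δ ^ (-s) * (α / (s - α)) * ε ^ (s - α) := by
        rw [hus, Real.rpow_sub hε, Real.rpow_neg hε.le α, Real.rpow_neg hε.le s]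
        have h1 : ε ^ s ≠ 0 := (Real.rpow_pos_of_pos hε s).ne'
        have h2 : ε ^ α ≠ 0 := (Real.rpow_pos_of_pos hε α).ne'
        field_simp

/-- **A limsup bound for maxima of truncated regularly varying variables.**
If `(X_n)` are identically distributed nonnegative random variables with a regularly varying
tail of index `α > 0`, and `n P(X_1 > a_n) → 1`, then for every `s > α`, `ε > 0`, `δ > 0`,
`limsup_n P(a_n⁻¹ max_{1≤i≤n} X_i 1{X_i < ε a_n} > δ) ≤ δ^{-s} (α/(s-α)) ε^{s-α}`. -/
theorem limsup_max_truncated_bound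
    {Ω : Type*} [MeasurableSpace Ω] (P : Measure Ω) [IsProbabilityMeasure P]
    (X : ℕ → Ω → ℝ)
    (hXmeas : ∀ i, Measurable (X i)) (hXnonneg : ∀ i ω, 0 ≤ X i ω)
    (hident : ∀ i, 1 ≤ i → Measure.map (X i) P = Measure.map (X 1) P)
    (α : ℝ) (hα : 0 < α)
    (htailpos : ∀ x : ℝ, 0 < x → 0 < P {ω | X 1 ω > x})
    (hrv : ∀ t : ℝ, 0 < t →
      Tendsto (fun x : ℝ => (P {ω | X 1 ω > t * x}).toReal / (P {ω | X 1 ω > x}).toReal)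
        atTop (nhds (t ^ (-α))))
    (a : ℕ → ℝ) (hapos : ∀ n, 0 < a n)
    (ha : Tendsto (fun n : ℕ => (n : ℝ) * (P {ω | X 1 ω > a n}).toReal) atTop (nhds 1)) :
    ∀ s : ℝ, α < s → ∀ ε : ℝ, 0 < ε → ∀ δ : ℝ, 0 < δ →
      Filter.limsup
        (fun n : ℕ => (P {ω | ((Finset.Icc 1 n).fold max 0
            (fun i => if X i ω < ε * a n then X i ω else 0)) / a n > δ}).toReal) atTop
        ≤ δ ^ (-s) * (α / (s - α)) * ε ^ (s - α) := by
  have htoRealpos : ∀ x : ℝ, 0 < x → 0 < (P {ω | X 1 ω > x}).toReal := fun x hx =>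
    ENNReal.toReal_pos (htailpos x hx).ne' (measure_ne_top P _)
  -- Step 1 : a_n → ∞
  have haTop : Tendsto a atTop atTop := by
    rw [tendsto_atTop]
    intro b
    set M : ℝ := max b 1 with hM
    have hM0 : 0 < M := lt_of_lt_of_le one_pos (le_max_right _ _)
    have hc : 0 < (P {ω | X 1 ω > M}).toReal := htoRealpos M hM0
    have h2 : ∀ᶠ n : ℕ in atTop, (n : ℝ) * (P {ω | X 1 ω > a n}).toReal < 2 :=
      ha.eventually_lt_const (by norm_num)
    have h3 : ∀ᶠ n : ℕ in atTop, 2 / (P {ω | X 1 ω > M}).toReal < (n : ℝ) :=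
      tendsto_natCast_atTop_atTop.eventually_gt_atTop _
    filter_upwards [h2, h3] with n hn2 hn3
    by_contra hb
    push_neg at hb
    have haM : a n < M := lt_of_lt_of_le hb (le_max_left _ _)
    have hmono : (P {ω | X 1 ω > M}) ≤ P {ω | X 1 ω > a n} :=
      measure_mono fun ω hω => lt_trans haM hω
    have hmono' : (P {ω | X 1 ω > M}).toReal ≤ (P {ω | X 1 ω > a n}).toReal :=
      (ENNReal.toReal_le_toReal (measure_ne_top P _) (measure_ne_top P _)).2 hmono
    have hn0 : (0:ℝ) < (n:ℝ) := lt_trans (by positivity) hn3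
    have h4 : (2:ℝ) < (n:ℝ) * (P {ω | X 1 ω > M}).toReal := (div_lt_iff₀ hc).1 hn3
    have h5 : (n:ℝ) * (P {ω | X 1 ω > M}).toReal ≤ (n:ℝ) * (P {ω | X 1 ω > a n}).toReal :=
      mul_le_mul_of_nonneg_left hmono' hn0.le
    linarith
  -- Step 2 : n P(X₁ > c a_n) → c^{-α}
  have hlim : ∀ c : ℝ, 0 < c →
      Tendsto (fun n : ℕ => (n : ℝ) * (P {ω | X 1 ω > c * a n}).toReal) atTop
        (nhds (c ^ (-α))) := by
    intro c hc
    have h1 := (hrv c hc).comp haTop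
    have h2 := ha.mul h1
    rw [one_mul] at h2
    apply h2.congr
    intro n
    have hne : (P {ω | X 1 ω > a n}).toReal ≠ 0 := (htoRealpos _ (hapos n)).ne'
    simp only [Function.comp_apply]
    field_simp
  intro s hs ε hε δ hδ
  have hRHSnn : 0 ≤ δ ^ (-s) * (α / (s - α)) * ε ^ (s - α) :=
    mul_nonneg (mul_nonneg (Real.rpow_pos_of_pos hδ _).le
      (div_nonneg hα.le (by linarith))) (Real.rpow_pos_of_pos hε _).le
  by_cases hδε : δ < ε
  swap
  · -- trivial case ε ≤ δ : the event is empty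
    push_neg at hδε
    have hempty : (fun n : ℕ => (P {ω | ((Finset.Icc 1 n).fold max 0
        (fun i => if X i ω < ε * a n then X i ω else 0)) / a n > δ}).toReal)
        = fun _ => (0:ℝ) := by
      funext n
      have h0 : {ω | ((Finset.Icc 1 n).fold max 0
          (fun i => if X i ω < ε * a n then X i ω else 0)) / a n > δ} = ∅ := by
        rw [Set.eq_empty_iff_forall_notMem]
        intro ω hω
        simp only [Set.mem_setOf_eq] at hω
        have h2 := (lt_div_iff₀ (hapos n)).1 hω
        have h3 : (Finset.Icc 1 n).fold max 0
            (fun i => if X i ω < ε * a n then X i ω else 0) ≤ δ * a n := by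
          rw [Finset.fold_max_le]
          refine ⟨mul_nonneg hδ.le (hapos n).le, fun i _ => ?_⟩
          by_cases hic : X i ω < ε * a n
          · rw [if_pos hic]
            exact hic.le.trans (mul_le_mul_of_nonneg_right hδε (hapos n).le)
          · rw [if_neg hic]; exact mul_nonneg hδ.le (hapos n).le
        linarith
      rw [h0, measure_empty]
      simp
    rw [hempty, limsup_const]
    exact hRHSnn
  · -- main case δ < ε
    set f : ℕ → ℝ := fun n : ℕ => (P {ω | ((Finset.Icc 1 n).fold max 0
        (fun i => if X i ω < ε * a n then X i ω else 0)) / a n > δ}).toReal with hf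
    set g : ℕ → ℝ := fun n : ℕ => (n : ℝ) * (P {ω | X 1 ω > δ * a n}).toReal
        - (n : ℝ) * (P {ω | X 1 ω > ε * a n}).toReal with hg
    have hfg : ∀ n, f n ≤ g n := by
      intro n
      -- union bound
      have hsub : {ω | ((Finset.Icc 1 n).fold max 0
          (fun i => if X i ω < ε * a n then X i ω else 0)) / a n > δ}
          ⊆ ⋃ i ∈ Finset.Icc 1 n, X i ⁻¹' Set.Ioo (δ * a n) (ε * a n) := by
        intro ω hω
        simp only [Set.mem_setOf_eq] at hω
        have h2 := (lt_div_iff₀ (hapos n)).1 hω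
        by_contra hmem
        simp only [Set.mem_iUnion, not_exists] at hmem
        have h3 : (Finset.Icc 1 n).fold max 0
            (fun i => if X i ω < ε * a n then X i ω else 0) ≤ δ * a n := by
          rw [Finset.fold_max_le]
          refine ⟨mul_nonneg hδ.le (hapos n).le, fun i hi => ?_⟩
          by_cases hic : X i ω < ε * a n
          · rw [if_pos hic]
            by_contra hgt
            push_neg at hgt
            exact hmem i hi (Set.mem_Ioo.2 ⟨hgt, hic⟩)
          · rw [if_neg hic]; exact mul_nonneg hδ.le (hapos n).le
        linarith
      have hident' : ∀ i ∈ Finset.Icc 1 n,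
          P (X i ⁻¹' Set.Ioo (δ * a n) (ε * a n))
            = P (X 1 ⁻¹' Set.Ioo (δ * a n) (ε * a n)) := by
        intro i hi
        have h1 : 1 ≤ i := (Finset.mem_Icc.1 hi).1
        rw [← Measure.map_apply (hXmeas i) measurableSet_Ioo, hident i h1,
          Measure.map_apply (hXmeas 1) measurableSet_Ioo]
      have hbound : P {ω | ((Finset.Icc 1 n).fold max 0
          (fun i => if X i ω < ε * a n then X i ω else 0)) / a n > δ}
          ≤ (n : ℝ≥0∞) * P (X 1 ⁻¹' Set.Ioo (δ * a n) (ε * a n)) := by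
        calc P {ω | ((Finset.Icc 1 n).fold max 0
              (fun i => if X i ω < ε * a n then X i ω else 0)) / a n > δ}
            ≤ P (⋃ i ∈ Finset.Icc 1 n, X i ⁻¹' Set.Ioo (δ * a n) (ε * a n)) :=
              measure_mono hsub
          _ ≤ ∑ i ∈ Finset.Icc 1 n, P (X i ⁻¹' Set.Ioo (δ * a n) (ε * a n)) :=
              measure_biUnion_finset_le _ _
          _ = ∑ i ∈ Finset.Icc 1 n, P (X 1 ⁻¹' Set.Ioo (δ * a n) (ε * a n)) :=
              Finset.sum_congr rfl hident'
          _ = (n : ℝ≥0∞) * P (X 1 ⁻¹' Set.Ioo (δ * a n) (ε * a n)) := by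
              rw [Finset.sum_const, Nat.card_Icc, nsmul_eq_mul]
              norm_num
      have hsplit : P (X 1 ⁻¹' Set.Ioo (δ * a n) (ε * a n)) + P {ω | X 1 ω > ε * a n}
          ≤ P {ω | X 1 ω > δ * a n} := by
        have hdisj : Disjoint (X 1 ⁻¹' Set.Ioo (δ * a n) (ε * a n)) {ω | X 1 ω > ε * a n} := by
          rw [Set.disjoint_left]
          intro ω h1 h2
          exact absurd h2 (not_lt.2 h1.2.le)
        rw [← measure_union hdisj ((hXmeas 1) measurableSet_Ioi)]
        apply measure_mono
        rintro ω (h1 | h1)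
        · exact h1.1
        · exact lt_trans (mul_lt_mul_of_pos_right hδε (hapos n)) h1
      -- translate to reals
      have hnt : ((n : ℝ≥0∞) * P (X 1 ⁻¹' Set.Ioo (δ * a n) (ε * a n))) ≠ ⊤ :=
        ENNReal.mul_ne_top (ENNReal.natCast_ne_top n) (measure_ne_top P _)
      have h1 : f n ≤ (n : ℝ) * (P (X 1 ⁻¹' Set.Ioo (δ * a n) (ε * a n))).toReal := by
        have := (ENNReal.toReal_le_toReal (measure_ne_top P _) hnt).2 hbound
        rwa [ENNReal.toReal_mul, ENNReal.toReal_natCast] at this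
      have h2 : (P (X 1 ⁻¹' Set.Ioo (δ * a n) (ε * a n))).toReal
          + (P {ω | X 1 ω > ε * a n}).toReal ≤ (P {ω | X 1 ω > δ * a n}).toReal := by
        rw [← ENNReal.toReal_add (measure_ne_top P _) (measure_ne_top P _)]
        exact (ENNReal.toReal_le_toReal (by finiteness) (measure_ne_top P _)).2 hsplit
      have h3 : (n : ℝ) * (P (X 1 ⁻¹' Set.Ioo (δ * a n) (ε * a n))).toReal
          ≤ (n : ℝ) * (P {ω | X 1 ω > δ * a n}).toReal
            - (n : ℝ) * (P {ω | X 1 ω > ε * a n}).toReal := by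
        have := mul_le_mul_of_nonneg_left (by linarith :
          (P (X 1 ⁻¹' Set.Ioo (δ * a n) (ε * a n))).toReal
            ≤ (P {ω | X 1 ω > δ * a n}).toReal - (P {ω | X 1 ω > ε * a n}).toReal)
          (Nat.cast_nonneg n : (0:ℝ) ≤ (n:ℝ))
        linarith [this]
      exact h1.trans h3
    have hglim : Tendsto g atTop (nhds (δ ^ (-α) - ε ^ (-α))) := (hlim δ hδ).sub (hlim ε hε)
    have hcb : IsCoboundedUnder (· ≤ ·) atTop f :=
      isCoboundedUnder_le_of_le atTop (x := 0) fun n => ENNReal.toReal_nonneg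
    have hbd : IsBoundedUnder (· ≤ ·) atTop g := hglim.isBoundedUnder_le
    calc limsup f atTop ≤ limsup g atTop :=
          limsup_le_limsup (Eventually.of_forall hfg) hcb hbd
      _ = δ ^ (-α) - ε ^ (-α) := hglim.limsup_eq
      _ ≤ δ ^ (-s) * (α / (s - α)) * ε ^ (s - α) := aux_rv_ineq hα hs hε hδ hδε
end

section
/- Let (Z_n)_{n∈ℤ} be i.i.d. unit Fréchet random variables, let m ∈ ℕ, let c_0, …, c_m ≥ 0 with Σ_{i=0}^m c_i = 1 and c_0, c_m > 0, and define the moving maxima sequence X_n = max_{0≤i≤m} c_i Z_{n−i} for n ∈ ℤ. Let (a_n) be positive reals with n·P(Z_1 > a_n) → 1, let (r_n) be positive integers with r_n → ∞ and r_n/n → 0, let u > 0 and let s be an integer with s > m. Then the event {max_{s≤|i|≤r_n} X_i > u a_n} is independent of the event {X_0 > u a_n}, and lim_{n→∞} P(max_{s≤|i|≤r_n} X_i > u a_n | X_0 > u a_n) = 0. -/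
open MeasureTheory Filter ProbabilityTheory
open scoped ENNReal
/-- The finite order moving maxima process `X_n = max_{0 ≤ i ≤ m} c_i Z_{n-i}`. -/
noncomputable def movingMaxima {Ω : Type*} (Z : ℤ → Ω → ℝ) (c : ℕ → ℝ) (m : ℕ)
    (n : ℤ) (ω : Ω) : ℝ :=
  (Finset.range (m + 1)).sup' (Finset.nonempty_range_iff.mpr m.succ_ne_zero)
    (fun i => c i * Z (n - i) ω)

/-- The event `{max_{s ≤ |i| ≤ r_n} X_i > u a_n}` for the moving maxima sequence. -/
noncomputable def mmFarMaxEvent {Ω : Type*} (Z : ℤ → Ω → ℝ) (c : ℕ → ℝ) (m : ℕ)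
    (a : ℕ → ℝ) (r : ℕ → ℕ) (u : ℝ) (s : ℕ) (n : ℕ) : Set Ω :=
  {ω | ((Finset.Icc (-(r n : ℤ)) (r n)).filter (fun i => (s : ℤ) ≤ |i|)).fold max 0
      (fun i => movingMaxima Z c m i ω) > u * a n}

lemma measurable_fold_max {Ω ι : Type*} [MeasurableSpace Ω] (s : Finset ι) (b : ℝ)
    (g : ι → Ω → ℝ) (hg : ∀ i, Measurable (g i)) :
    Measurable fun ω => s.fold max b fun i => g i ω := by
  classical
  induction s using Finset.induction_on with
  | empty => simp only [Finset.fold_empty]; exact measurable_const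
  | insert _ _ h ih => simp only [Finset.fold_insert h]; exact (hg _).max ih

noncomputable def restMM (c : ℕ → ℝ) (m : ℕ) (T : Finset ℤ) (i : ℤ) (x : T → ℝ) : ℝ :=
  (Finset.range (m + 1)).sup' (Finset.nonempty_range_iff.mpr m.succ_ne_zero)
    (fun k => c k * if h : (i - (k : ℤ)) ∈ T then x ⟨_, h⟩ else 0)

lemma measurable_restMM (c : ℕ → ℝ) (m : ℕ) (T : Finset ℤ) (i : ℤ) :
    Measurable (restMM c m T i) := by
  have he : restMM c m T i = (Finset.range (m + 1)).sup'
      (Finset.nonempty_range_iff.mpr m.succ_ne_zero)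
      (fun k (x : T → ℝ) => c k * if h : (i - (k : ℤ)) ∈ T then x ⟨_, h⟩ else 0) := by
    funext x
    rw [Finset.sup'_apply]
    rfl
  rw [he]
  apply Finset.measurable_sup'
  intro k _
  by_cases h : (i - (k : ℤ)) ∈ T
  · simp only [h, dif_pos]
    exact (measurable_pi_apply _).const_mul _
  · simp only [h, dif_neg, not_false_iff, mul_zero]
    exact measurable_const

lemma restMM_eq {Ω : Type*} (Z : ℤ → Ω → ℝ) (c : ℕ → ℝ) (m : ℕ) (T : Finset ℤ) (i : ℤ)
    (hT : ∀ k ∈ Finset.range (m + 1), i - (k : ℤ) ∈ T) (ω : Ω) :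
    restMM c m T i (fun j : T => Z j ω) = movingMaxima Z c m i ω := by
  unfold restMM movingMaxima
  refine Finset.sup'_congr _ rfl fun k hk => ?_
  rw [dif_pos (hT k hk)]

theorem mm_part1
    {Ω : Type*} [MeasurableSpace Ω] (P : Measure Ω) [IsProbabilityMeasure P]
    (Z : ℤ → Ω → ℝ) (hZmeas : ∀ i, Measurable (Z i))
    (hindep : iIndepFun Z P)
    (m : ℕ) (c : ℕ → ℝ)
    (a : ℕ → ℝ) (r : ℕ → ℕ) (u : ℝ) (s : ℕ) (hsm : m < s) (n : ℕ) :
      P ({ω | ((Finset.Icc (-(r n : ℤ)) (r n)).filter (fun i => (s : ℤ) ≤ |i|)).fold max 0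
            (fun i => movingMaxima Z c m i ω) > u * a n}
          ∩ {ω | movingMaxima Z c m 0 ω > u * a n})
        = P {ω | ((Finset.Icc (-(r n : ℤ)) (r n)).filter (fun i => (s : ℤ) ≤ |i|)).fold max 0
            (fun i => movingMaxima Z c m i ω) > u * a n}
          * P {ω | movingMaxima Z c m 0 ω > u * a n} := by
  classical
  set Sn : Finset ℤ := (Finset.Icc (-(r n : ℤ)) (r n)).filter (fun i => (s : ℤ) ≤ |i|) with hSn
  set T : Finset ℤ :=
    (Finset.Icc (-(r n : ℤ) - m) (r n)).filter (fun j => j < -(m : ℤ) ∨ 0 < j) with hT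
  set S0 : Finset ℤ := Finset.Icc (-(m : ℤ)) 0 with hS0
  have hd : Disjoint T S0 := by
    rw [Finset.disjoint_left]
    intro j hj hj'
    simp only [hT, Finset.mem_filter, Finset.mem_Icc] at hj
    simp only [hS0, Finset.mem_Icc] at hj'
    omega
  have hmemT : ∀ i ∈ Sn, ∀ k ∈ Finset.range (m + 1), i - (k : ℤ) ∈ T := by
    intro i hi k hk
    simp only [hSn, Finset.mem_filter, Finset.mem_Icc] at hi
    rw [Finset.mem_range, Nat.lt_succ_iff] at hk
    obtain ⟨⟨h1, h2⟩, habs⟩ := hi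
    rw [le_abs] at habs
    simp only [hT, Finset.mem_filter, Finset.mem_Icc]
    omega
  have hmemS0 : ∀ k ∈ Finset.range (m + 1), (0 : ℤ) - (k : ℤ) ∈ S0 := by
    intro k hk
    rw [Finset.mem_range, Nat.lt_succ_iff] at hk
    simp only [hS0, Finset.mem_Icc]
    omega
  have hA : {ω | Sn.fold max 0 (fun i => movingMaxima Z c m i ω) > u * a n}
      = (fun ω (j : T) => Z j ω) ⁻¹'
        {x | Sn.fold max 0 (fun i => restMM c m T i x) > u * a n} := by
    ext ω
    have : Sn.fold max 0 (fun i => restMM c m T i (fun j : T => Z j ω))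
        = Sn.fold max 0 (fun i => movingMaxima Z c m i ω) :=
      Finset.fold_congr fun i hi => restMM_eq Z c m T i (hmemT i hi) ω
    simp only [Set.mem_setOf_eq, Set.mem_preimage, this]
  have hB : {ω | movingMaxima Z c m 0 ω > u * a n}
      = (fun ω (j : S0) => Z j ω) ⁻¹' {x | restMM c m S0 0 x > u * a n} := by
    ext ω
    simp only [Set.mem_setOf_eq, Set.mem_preimage, restMM_eq Z c m S0 0 hmemS0 ω]
  have hIF : IndepFun (fun ω (j : T) => Z j ω) (fun ω (j : S0) => Z j ω) P :=
    hindep.indepFun_finset T S0 hd hZmeas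
  have hmA : MeasurableSet {x : T → ℝ | Sn.fold max 0 (fun i => restMM c m T i x) > u * a n} :=
    measurableSet_lt measurable_const
      (measurable_fold_max Sn 0 _ fun i => measurable_restMM c m T i)
  have hmB : MeasurableSet {x : S0 → ℝ | restMM c m S0 0 x > u * a n} :=
    measurableSet_lt measurable_const (measurable_restMM c m S0 0)
  rw [hA, hB]
  exact hIF.measure_inter_preimage_eq_mul _ _ hmA hmB

lemma frechet_tail {Ω : Type*} [MeasurableSpace Ω] (P : Measure Ω) [IsProbabilityMeasure P]
    (W : Ω → ℝ) (hW : Measurable W)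
    (hf : ∀ x : ℝ, 0 < x → (P {ω | W ω ≤ x}).toReal = Real.exp (-(1 / x)))
    (x : ℝ) (hx : 0 < x) :
    P {ω | W ω > x} = ENNReal.ofReal (1 - Real.exp (-(1 / x))) := by
  have hm : MeasurableSet {ω | W ω ≤ x} := measurableSet_le hW measurable_const
  have hle : P {ω | W ω ≤ x} = ENNReal.ofReal (Real.exp (-(1 / x))) := by
    rw [← hf x hx, ENNReal.ofReal_toReal (measure_ne_top _ _)]
  have hcompl : {ω | W ω > x} = {ω | W ω ≤ x}ᶜ := by
    ext ω; simp [not_le]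
  rw [hcompl, measure_compl hm (measure_ne_top _ _), measure_univ, hle,
    show (1 : ℝ≥0∞) = ENNReal.ofReal 1 from ENNReal.ofReal_one.symm,
    ← ENNReal.ofReal_sub _ (Real.exp_nonneg _)]


/-- **Anticlustering for finite order moving maxima.** For the moving maxima sequence built
from i.i.d. unit Fréchet variables, with `s > m`, the event `{max_{s ≤ |i| ≤ r_n} X_i > u a_n}`
is independent of `{X_0 > u a_n}`, and
`P(max_{s ≤ |i| ≤ r_n} X_i > u a_n | X_0 > u a_n) → 0` as `n → ∞`. -/
theorem moving_maxima_anticlustering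
    {Ω : Type*} [MeasurableSpace Ω] (P : Measure Ω) [IsProbabilityMeasure P]
    (Z : ℤ → Ω → ℝ) (hZmeas : ∀ i, Measurable (Z i))
    (hindep : iIndepFun Z P)
    (hfrechet : ∀ i : ℤ,
      (∀ x : ℝ, 0 < x → (P {ω | Z i ω ≤ x}).toReal = Real.exp (-(1 / x))) ∧
      (∀ x : ℝ, x ≤ 0 → P {ω | Z i ω ≤ x} = 0))
    (m : ℕ) (c : ℕ → ℝ) (hc : ∀ i ≤ m, 0 ≤ c i)
    (hcsum : ∑ i ∈ Finset.range (m + 1), c i = 1)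
    (hc0 : 0 < c 0) (hcm : 0 < c m)
    (a : ℕ → ℝ) (hapos : ∀ n, 0 < a n)
    (ha : Tendsto (fun n : ℕ => (n : ℝ) * (P {ω | Z 1 ω > a n}).toReal) atTop (nhds 1))
    (r : ℕ → ℕ) (hrpos : ∀ n, 0 < r n) (hrtop : Tendsto r atTop atTop)
    (hrn : Tendsto (fun n : ℕ => (r n : ℝ) / n) atTop (nhds 0))
    (u : ℝ) (hu : 0 < u) (s : ℕ) (hsm : m < s) :
    (∀ n : ℕ,
      P (mmFarMaxEvent Z c m a r u s n ∩ {ω | movingMaxima Z c m 0 ω > u * a n})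
        = P (mmFarMaxEvent Z c m a r u s n) * P {ω | movingMaxima Z c m 0 ω > u * a n}) ∧
    Tendsto
      (fun n : ℕ =>
        (P (mmFarMaxEvent Z c m a r u s n ∩ {ω | movingMaxima Z c m 0 ω > u * a n})).toReal
          / (P {ω | movingMaxima Z c m 0 ω > u * a n}).toReal)
      atTop (nhds 0) := by

  classical
  have hCpos : ∀ n, 0 < u * a n := fun n => mul_pos hu (hapos n)
  set A : ℕ → Set Ω := fun n =>
    {ω | ((Finset.Icc (-(r n : ℤ)) (r n)).filter (fun i => (s : ℤ) ≤ |i|)).fold max 0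
      (fun i => movingMaxima Z c m i ω) > u * a n} with hAdef
  set B : ℕ → Set Ω := fun n => {ω | movingMaxima Z c m 0 ω > u * a n} with hBdef
  -- tail probabilities
  have htail : ∀ (j : ℤ) (x : ℝ), 0 < x →
      P {ω | Z j ω > x} = ENNReal.ofReal (1 - Real.exp (-(1 / x))) := fun j x hx =>
    frechet_tail P (Z j) (hZmeas j) (hfrechet j).1 x hx
  have htailpos : ∀ (j : ℤ) (x : ℝ), 0 < x → 0 < P {ω | Z j ω > x} := by
    intro j x hx
    rw [htail j x hx]
    apply ENNReal.ofReal_pos.mpr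
    have : Real.exp (-(1 / x)) < 1 := Real.exp_lt_one_iff.mpr (neg_lt_zero.mpr (by positivity))
    linarith
  -- B has positive probability
  have hBne : ∀ n, P (B n) ≠ 0 := by
    intro n
    have hx : 0 < (u * a n) / c 0 := div_pos (hCpos n) hc0
    have hsub : {ω | Z 0 ω > (u * a n) / c 0} ⊆ B n := by
      intro ω hω
      simp only [Set.mem_setOf_eq] at hω
      show u * a n < movingMaxima Z c m 0 ω
      have h1 : c 0 * Z ((0 : ℤ) - ((0 : ℕ) : ℤ)) ω ≤ movingMaxima Z c m 0 ω := by
        unfold movingMaxima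
        exact Finset.le_sup' (fun i : ℕ => c i * Z ((0 : ℤ) - i) ω)
          (Finset.mem_range.mpr m.succ_pos)
      have h2 : u * a n < c 0 * Z 0 ω := by
        rw [← div_lt_iff₀' hc0]; exact hω
      simp only [Nat.cast_zero, sub_zero] at h1
      linarith
    have := lt_of_lt_of_le (htailpos 0 _ hx) (measure_mono hsub)
    exact fun h => by rw [h] at this; exact lt_irrefl _ this
  -- union bound : (P (A n)).toReal ≤ (2 r_n + 1)(m+1)(1 - exp(-1/(u a_n)))
  have hAbound : ∀ n, (P (A n)).toReal ≤
      (2 * (r n : ℝ) + 1) * ((m : ℝ) + 1) * (1 - Real.exp (-(1 / (u * a n)))) := by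
    intro n
    set Sn : Finset ℤ := (Finset.Icc (-(r n : ℤ)) (r n)).filter (fun i => (s : ℤ) ≤ |i|)
      with hSndef
    have hsub1 : A n ⊆ ⋃ i ∈ Sn, {ω | movingMaxima Z c m i ω > u * a n} := by
      intro ω hω
      have hω' : u * a n < Sn.fold max 0 (fun i => movingMaxima Z c m i ω) := hω
      rw [Finset.lt_fold_max] at hω'
      rcases hω' with h | ⟨i, hi, h⟩
      · exact absurd h (not_lt.mpr (le_of_lt (hCpos n)))
      · exact Set.mem_biUnion hi h
    have hsub2 : ∀ i : ℤ, {ω | movingMaxima Z c m i ω > u * a n}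
        ⊆ ⋃ k ∈ Finset.range (m + 1), {ω | Z (i - (k : ℤ)) ω > u * a n} := by
      intro i ω hω
      have hω' : u * a n < (Finset.range (m + 1)).sup'
          (Finset.nonempty_range_iff.mpr m.succ_ne_zero)
          (fun k => c k * Z (i - (k : ℤ)) ω) := hω
      rw [Finset.lt_sup'_iff] at hω'
      obtain ⟨k, hk, hlt⟩ := hω'
      have hkm : k ≤ m := Nat.lt_succ_iff.mp (Finset.mem_range.mp hk)
      have hck1 : c k ≤ 1 := by
        rw [← hcsum]
        exact Finset.single_le_sum (fun j hj => hc j (Nat.lt_succ_iff.mp (Finset.mem_range.mp hj)))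
          hk
      have hckn : 0 ≤ c k := hc k hkm
      have hZ : u * a n < Z (i - (k : ℤ)) ω := by
        by_contra h
        push_neg at h
        nlinarith [hCpos n]
      exact Set.mem_biUnion hk hZ
    have hq0 : (0 : ℝ) ≤ 1 - Real.exp (-(1 / (u * a n))) := by
      have : Real.exp (-(1 / (u * a n))) ≤ 1 :=
        Real.exp_le_one_iff.mpr (neg_nonpos.mpr (le_of_lt (one_div_pos.mpr (hCpos n))))
      linarith
    have hcard : Sn.card ≤ 2 * r n + 1 := by
      calc Sn.card ≤ (Finset.Icc (-(r n : ℤ)) (r n)).card := Finset.card_filter_le _ _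
        _ = 2 * r n + 1 := by rw [Int.card_Icc]; omega
    have key : P (A n) ≤ (((2 * r n + 1) * (m + 1) : ℕ) : ℝ≥0∞)
        * ENNReal.ofReal (1 - Real.exp (-(1 / (u * a n)))) := by
      calc P (A n) ≤ P (⋃ i ∈ Sn, {ω | movingMaxima Z c m i ω > u * a n}) :=
            measure_mono hsub1
        _ ≤ ∑ i ∈ Sn, P {ω | movingMaxima Z c m i ω > u * a n} :=
            measure_biUnion_finset_le _ _
        _ ≤ ∑ i ∈ Sn, ∑ k ∈ Finset.range (m + 1), P {ω | Z (i - (k : ℤ)) ω > u * a n} :=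
            Finset.sum_le_sum fun i _ =>
              (measure_mono (hsub2 i)).trans (measure_biUnion_finset_le _ _)
        _ = ∑ i ∈ Sn, ∑ k ∈ Finset.range (m + 1),
              ENNReal.ofReal (1 - Real.exp (-(1 / (u * a n)))) := by
            refine Finset.sum_congr rfl fun i _ => Finset.sum_congr rfl fun k _ => ?_
            exact htail _ _ (hCpos n)
        _ = ((Sn.card * (m + 1) : ℕ) : ℝ≥0∞)
              * ENNReal.ofReal (1 - Real.exp (-(1 / (u * a n)))) := by
            simp only [Finset.sum_const, nsmul_eq_mul, Finset.card_range]
            push_cast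
            ring
        _ ≤ (((2 * r n + 1) * (m + 1) : ℕ) : ℝ≥0∞)
              * ENNReal.ofReal (1 - Real.exp (-(1 / (u * a n)))) := by
            have hmc : ((Sn.card * (m + 1) : ℕ) : ℝ≥0∞)
                ≤ (((2 * r n + 1) * (m + 1) : ℕ) : ℝ≥0∞) := by
              exact_mod_cast Nat.mul_le_mul_right _ hcard
            exact mul_le_mul_left hmc _
    have hfin : (((2 * r n + 1) * (m + 1) : ℕ) : ℝ≥0∞)
        * ENNReal.ofReal (1 - Real.exp (-(1 / (u * a n)))) ≠ ∞ :=
      ENNReal.mul_ne_top (ENNReal.natCast_ne_top _) ENNReal.ofReal_ne_top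
    have := ENNReal.toReal_mono hfin key
    rw [ENNReal.toReal_mul, ENNReal.toReal_natCast, ENNReal.toReal_ofReal hq0] at this
    refine this.trans (le_of_eq ?_)
    push_cast
    ring
  -- asymptotics
  set q : ℕ → ℝ := fun n => (P {ω | Z 1 ω > a n}).toReal with hqdef
  have hq : ∀ n, q n = 1 - Real.exp (-(1 / a n)) := by
    intro n
    show (P {ω | Z 1 ω > a n}).toReal = _
    rw [htail 1 (a n) (hapos n), ENNReal.toReal_ofReal]
    have : Real.exp (-(1 / a n)) ≤ 1 :=
      Real.exp_le_one_iff.mpr (neg_nonpos.mpr (le_of_lt (one_div_pos.mpr (hapos n))))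
    linarith
  have hq0 : Tendsto q atTop (nhds 0) := by
    have h1 : Tendsto (fun n : ℕ => ((n : ℝ) * q n) * (1 / n)) atTop (nhds (1 * 0)) :=
      ha.mul tendsto_one_div_atTop_nhds_zero_nat
    rw [one_mul] at h1
    refine h1.congr' ?_
    filter_upwards [eventually_ge_atTop 1] with n hn
    have hn' : (n : ℝ) ≠ 0 := Nat.cast_ne_zero.mpr (by omega)
    field_simp
  have hta : Tendsto (fun n : ℕ => 1 / a n) atTop (nhds 0) := by
    have hcont : Tendsto (fun n : ℕ => -Real.log (1 - q n)) atTop (nhds 0) := by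
      have h1 : Tendsto (fun n : ℕ => (1 : ℝ) - q n) atTop (nhds 1) := by
        simpa using tendsto_const_nhds.sub hq0
      have h2 := (Real.continuousAt_log (by norm_num : (1 : ℝ) ≠ 0)).tendsto.comp h1
      rw [Real.log_one] at h2
      simpa using h2.neg
    refine hcont.congr fun n => ?_
    rw [hq n]
    simp [Real.log_exp]
  -- the product bound tends to zero
  have hprod : Tendsto (fun n : ℕ => (2 * (r n : ℝ) + 1) * (1 / a n)) atTop (nhds 0) := by
    have hH : Tendsto (fun n : ℕ => ((2 * (r n : ℝ) + 1) / n)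
        * (Real.exp (1 / a n) * ((n : ℝ) * q n))) atTop (nhds (0 * (1 * 1))) := by
      refine Tendsto.mul ?_ (Tendsto.mul ?_ ha)
      · have h1 : Tendsto (fun n : ℕ => 2 * ((r n : ℝ) / n) + 1 / n) atTop
            (nhds (2 * 0 + 0)) :=
          (hrn.const_mul 2).add tendsto_one_div_atTop_nhds_zero_nat
        rw [show (2 : ℝ) * 0 + 0 = 0 by ring] at h1
        refine h1.congr fun n => ?_
        ring
      · have := (Real.continuous_exp.tendsto 0).comp hta
        simpa [Function.comp_def] using this
    rw [show (0 : ℝ) * (1 * 1) = 0 by ring] at hH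
    refine squeeze_zero' ?_ ?_ hH
    · filter_upwards with n
      have h0 : 0 ≤ 1 / a n := le_of_lt (one_div_pos.mpr (hapos n))
      exact mul_nonneg (by positivity) h0
    · filter_upwards [eventually_ge_atTop 1] with n hn
      have hn' : (0 : ℝ) < n := by exact_mod_cast Nat.lt_of_lt_of_le Nat.zero_lt_one hn
      have hkey : 1 / a n ≤ Real.exp (1 / a n) * q n := by
        have he : Real.exp (1 / a n) * (1 - Real.exp (-(1 / a n)))
            = Real.exp (1 / a n) - 1 := by
          rw [mul_sub, mul_one, ← Real.exp_add]
          simp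
        have hle : 1 / a n + 1 ≤ Real.exp (1 / a n) := Real.add_one_le_exp _
        rw [hq n, he]
        linarith
      have hr1 : (0 : ℝ) ≤ 2 * (r n : ℝ) + 1 := by positivity
      calc (2 * (r n : ℝ) + 1) * (1 / a n)
          ≤ (2 * (r n : ℝ) + 1) * (Real.exp (1 / a n) * q n) :=
            mul_le_mul_of_nonneg_left hkey hr1
        _ = (2 * (r n : ℝ) + 1) / n * (Real.exp (1 / a n) * ((n : ℝ) * q n)) := by
            field_simp
  -- final bound tends to zero
  have hgto : Tendsto (fun n : ℕ => (2 * (r n : ℝ) + 1) * ((m : ℝ) + 1)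
      * (1 - Real.exp (-(1 / (u * a n))))) atTop (nhds 0) := by
    have hbig : Tendsto (fun n : ℕ => (((m : ℝ) + 1) / u)
        * ((2 * (r n : ℝ) + 1) * (1 / a n))) atTop (nhds 0) := by
      have := hprod.const_mul (((m : ℝ) + 1) / u)
      simpa using this
    refine squeeze_zero' ?_ ?_ hbig
    · filter_upwards with n
      have h1 : Real.exp (-(1 / (u * a n))) ≤ 1 :=
        Real.exp_le_one_iff.mpr (neg_nonpos.mpr (le_of_lt (one_div_pos.mpr (hCpos n))))
      have h2 : (0 : ℝ) ≤ 1 - Real.exp (-(1 / (u * a n))) := by linarith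
      exact mul_nonneg (mul_nonneg (by positivity) (by positivity)) h2
    · filter_upwards with n
      have hexp : 1 - Real.exp (-(1 / (u * a n))) ≤ 1 / u * (1 / a n) := by
        have h1 : -(1 / (u * a n)) + 1 ≤ Real.exp (-(1 / (u * a n))) := Real.add_one_le_exp _
        have h2 : 1 / (u * a n) = 1 / u * (1 / a n) := by
          rw [one_div_mul_one_div]
        linarith [h2 ▸ h1]
      calc (2 * (r n : ℝ) + 1) * ((m : ℝ) + 1) * (1 - Real.exp (-(1 / (u * a n))))
          ≤ (2 * (r n : ℝ) + 1) * ((m : ℝ) + 1) * (1 / u * (1 / a n)) := by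
            apply mul_le_mul_of_nonneg_left hexp
            positivity
        _ = (((m : ℝ) + 1) / u) * ((2 * (r n : ℝ) + 1) * (1 / a n)) := by ring
  have hPA : Tendsto (fun n : ℕ => (P (A n)).toReal) atTop (nhds 0) :=
    squeeze_zero (fun n => ENNReal.toReal_nonneg) hAbound hgto
  -- conclude
  have h1 : ∀ n : ℕ,
      P (mmFarMaxEvent Z c m a r u s n ∩ {ω | movingMaxima Z c m 0 ω > u * a n})
        = P (mmFarMaxEvent Z c m a r u s n) * P {ω | movingMaxima Z c m 0 ω > u * a n} :=
    fun n => mm_part1 P Z hZmeas hindep m c a r u s hsm n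
  refine ⟨h1, ?_⟩
  have hfun : ∀ n : ℕ,
      (P (mmFarMaxEvent Z c m a r u s n ∩ {ω | movingMaxima Z c m 0 ω > u * a n})).toReal
        / (P {ω | movingMaxima Z c m 0 ω > u * a n}).toReal
      = (P (mmFarMaxEvent Z c m a r u s n)).toReal := by
    intro n
    have hne : (P {ω | movingMaxima Z c m 0 ω > u * a n}).toReal ≠ 0 :=
      ENNReal.toReal_ne_zero.mpr ⟨hBne n, measure_ne_top _ _⟩
    rw [h1 n, ENNReal.toReal_mul, mul_div_assoc, div_self hne, mul_one]
  have heq : (fun n : ℕ =>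
      (P (mmFarMaxEvent Z c m a r u s n ∩ {ω | movingMaxima Z c m 0 ω > u * a n})).toReal
        / (P {ω | movingMaxima Z c m 0 ω > u * a n}).toReal)
      = fun n : ℕ => (P (mmFarMaxEvent Z c m a r u s n)).toReal := funext hfun
  rw [heq]
  exact hPA
end

section
/- Let c_1 > c_0 > 0 and set λ = c_0/(2c_1). Let a > 0, ε > 0, n ≥ 2, and let z_0, z_1, …, z_n be nonnegative reals. Define x_j = max(c_0 z_j, c_1 z_{j−1}) for j = 1, …, n and S_k = max_{1≤j≤k} x_j for k = 1, …, n, with S_0 = 0. Suppose i' ∈ {1, …, n−1} satisfies z_{i'} > ε a and z_j ≤ λ ε a for every j ∈ {0, 1, …, i'+1} with j ≠ i'. Then S_{i'} − S_{i'−1} ≥ (c_0 ε a)/2 and S_{i'+1} − S_{i'} ≥ (c_1 − c_0) ε a. -/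
/-- **Deterministic two-jump estimate for the moving maxima recursion.**
With `c_1 > c_0 > 0`, `λ = c_0/(2c_1)`, `x_j = max(c_0 z_j, c_1 z_{j-1})` and
`S_k = max_{1≤j≤k} x_j` (with `S_0 = 0`), if `z_{i'} > ε a` and `z_j ≤ λ ε a` for all
`j ≤ i'+1`, `j ≠ i'`, then the running maximum has two consecutive large jumps at `i'`:
`S_{i'} - S_{i'-1} ≥ c_0 ε a / 2` and `S_{i'+1} - S_{i'} ≥ (c_1 - c_0) ε a`. -/
theorem two_jump_estimate
    (c₀ c₁ : ℝ) (hc₀ : 0 < c₀) (hc : c₀ < c₁)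
    (a ε : ℝ) (ha : 0 < a) (hε : 0 < ε)
    (n : ℕ) (hn : 2 ≤ n)
    (z : ℕ → ℝ) (hz : ∀ j ≤ n, 0 ≤ z j)
    (i' : ℕ) (hi'1 : 1 ≤ i') (hi'2 : i' ≤ n - 1)
    (hbig : z i' > ε * a)
    (hsmall : ∀ j ≤ i' + 1, j ≠ i' → z j ≤ (c₀ / (2 * c₁)) * ε * a) :
    ((Finset.Icc 1 i').fold max 0 (fun j => max (c₀ * z j) (c₁ * z (j - 1))))
        - ((Finset.Icc 1 (i' - 1)).fold max 0 (fun j => max (c₀ * z j) (c₁ * z (j - 1))))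
      ≥ c₀ * ε * a / 2 ∧
    ((Finset.Icc 1 (i' + 1)).fold max 0 (fun j => max (c₀ * z j) (c₁ * z (j - 1))))
        - ((Finset.Icc 1 i').fold max 0 (fun j => max (c₀ * z j) (c₁ * z (j - 1))))
      ≥ (c₁ - c₀) * ε * a := by
  have hc₁ : 0 < c₁ := hc₀.trans hc
  set L : ℝ := (c₀ / (2 * c₁)) * ε * a with hL
  have hL0 : 0 ≤ L := by positivity
  have hcL : c₁ * L = c₀ * ε * a / 2 := by
    rw [hL]; field_simp
  set f : ℕ → ℝ := fun j => max (c₀ * z j) (c₁ * z (j - 1)) with hf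
  -- bound on f j for j ≤ i'-1
  have hfsmall : ∀ j ∈ Finset.Icc 1 (i' - 1), f j ≤ c₀ * ε * a / 2 := by
    intro j hj
    simp only [Finset.mem_Icc] at hj
    have hj2 : j < i' := lt_of_le_of_lt hj.2 (Nat.sub_lt hi'1 one_pos)
    have h1 : z j ≤ L := hsmall j (by omega) (by omega)
    have h2 : z (j - 1) ≤ L := hsmall (j - 1) (by omega) (by omega)
    have hza : 0 ≤ z j := hz j (by omega)
    have hzb : 0 ≤ z (j - 1) := hz (j - 1) (by omega)
    rw [← hcL]
    exact max_le (le_trans (by nlinarith) (le_refl _)) (by nlinarith)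
  have hSsmall : (Finset.Icc 1 (i' - 1)).fold max 0 f ≤ c₀ * ε * a / 2 := by
    rw [Finset.fold_max_le]
    exact ⟨by positivity, hfsmall⟩
  have hzim : z (i' - 1) ≤ L := hsmall (i' - 1) (by omega) (by omega)
  have hzip : z (i' + 1) ≤ L := hsmall (i' + 1) (by omega) (by omega)
  have hfi' : f i' = max (c₀ * z i') (c₁ * z (i' - 1)) := rfl
  have hfi'le : f i' ≤ c₀ * z i' := by
    rw [hfi']
    refine max_le (le_refl _) ?_
    calc c₁ * z (i' - 1) ≤ c₁ * L := by nlinarith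
    _ = c₀ * ε * a / 2 := hcL
    _ ≤ c₀ * z i' := by nlinarith
  -- S i'
  have hsplit : Finset.Icc 1 i' = insert i' (Finset.Icc 1 (i' - 1)) := by
    ext j; simp only [Finset.mem_insert, Finset.mem_Icc]; omega
  have hSi' : (Finset.Icc 1 i').fold max 0 f = max (f i') ((Finset.Icc 1 (i' - 1)).fold max 0 f) := by
    rw [hsplit, Finset.fold_insert (by simp; omega)]
  have hSi'ge : (Finset.Icc 1 i').fold max 0 f ≥ c₀ * z i' := by
    rw [hSi']
    exact le_trans (le_max_left _ _) (le_max_left _ _)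
  have hSi'le : (Finset.Icc 1 i').fold max 0 f ≤ c₀ * z i' := by
    rw [hSi']
    exact max_le hfi'le (hSsmall.trans (by nlinarith))
  have hsplit2 : Finset.Icc 1 (i' + 1) = insert (i' + 1) (Finset.Icc 1 i') := by
    ext j; simp only [Finset.mem_insert, Finset.mem_Icc]; omega
  have hSp : (Finset.Icc 1 (i' + 1)).fold max 0 f ≥ c₁ * z i' := by
    rw [hsplit2, Finset.fold_insert (by simp)]
    refine le_trans ?_ (le_max_left _ _)
    have : f (i' + 1) = max (c₀ * z (i' + 1)) (c₁ * z i') := by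
      simp [hf]
    rw [this]
    exact le_max_right _ _
  constructor
  · have := hSi'ge
    have := hSsmall
    nlinarith
  · have := hSi'le
    nlinarith
end

section
/- Let (Z_n)_{n∈ℤ} be i.i.d. unit Fréchet random variables, let c_1 > c_0 > 0 with c_0 + c_1 = 1, define X_n = max(c_0 Z_n, c_1 Z_{n−1}) for n ∈ ℤ, and let (a_n) be positive reals with n·P(Z_1 > a_n) → 1. For k ≥ 1 let S_k = max_{1≤j≤k} X_j and S_0 = 0. Then there exists ε > 0 such that liminf_{n→∞} P(∃ i ∈ {1, …, n−1} : S_i − S_{i−1} ≥ (c_0 ε/2) a_n and S_{i+1} − S_i ≥ (c_1 − c_0) ε a_n) > 0. -/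
open MeasureTheory Filter ProbabilityTheory

/-- The running maximum `S_k = max_{1≤j≤k} X_j` (with `S_0 = 0`) of the moving maxima
sequence `X_j = max(c₀ Z_j, c₁ Z_{j-1})`. -/
noncomputable def runningMax {Ω : Type*} (Z : ℤ → Ω → ℝ) (c₀ c₁ : ℝ) (k : ℕ) (ω : Ω) : ℝ :=
  (Finset.Icc 1 k).fold max 0
    (fun j : ℕ => max (c₀ * Z (j : ℤ) ω) (c₁ * Z ((j : ℤ) - 1) ω))


open MeasureTheory Filter ProbabilityTheory Real

lemma phi_tendsto : Tendsto (fun u : ℝ => (1 - Real.exp (-u)) / u) (nhdsWithin 0 {0}ᶜ) (nhds 1) := by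
  have h : HasDerivAt (fun u : ℝ => 1 - Real.exp (-u)) 1 0 := by
    have h2 := (Real.hasDerivAt_exp (-0)).comp 0 (hasDerivAt_neg 0)
    have h3 := (hasDerivAt_const 0 (1:ℝ)).sub h2
    simpa [Function.comp_def, Pi.sub_def] using h3
  have h4 := hasDerivAt_iff_tendsto_slope.mp h
  refine Tendsto.congr (fun u => ?_) h4
  simp [slope_def_field]

lemma seq_limits {u : ℕ → ℝ} (hu : ∀ n, 0 < u n)
    (htop : Tendsto (fun n : ℕ => (n : ℝ) * (1 - Real.exp (-u n))) atTop (nhds 1)) :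
    Tendsto u atTop (nhds 0) ∧ Tendsto (fun n : ℕ => (n : ℝ) * u n) atTop (nhds 1) := by
  have hne : ∀ n, 1 - Real.exp (-u n) > 0 := fun n => by
    have := Real.exp_lt_one_iff.mpr (neg_lt_zero.mpr (hu n)); linarith
  have step1 : Tendsto (fun n : ℕ => 1 - Real.exp (-u n)) atTop (nhds 0) := by
    have h2 := htop.mul tendsto_inv_atTop_nhds_zero_nat
    rw [one_mul] at h2
    refine h2.congr' ?_
    filter_upwards [eventually_gt_atTop 0] with n hn
    have : (n:ℝ) ≠ 0 := Nat.cast_ne_zero.mpr hn.ne'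
    field_simp
  have hu0 : Tendsto u atTop (nhds 0) := by
    have step2 : Tendsto (fun n : ℕ => Real.exp (-u n)) atTop (nhds 1) := by
      have := tendsto_const_nhds (x := (1:ℝ)) (f := atTop).sub step1
      simpa using this
    have step3 : Tendsto (fun n : ℕ => Real.log (Real.exp (-u n))) atTop (nhds 0) := by
      have h6 := (Real.continuousAt_log one_ne_zero).tendsto.comp step2
      rw [Real.log_one] at h6
      exact h6
    have h5 : Tendsto (fun n : ℕ => -u n) atTop (nhds 0) :=
      step3.congr fun n => Real.log_exp _
    simpa using h5.neg
  refine ⟨hu0, ?_⟩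
  have hphi : Tendsto (fun n : ℕ => (1 - Real.exp (-u n)) / u n) atTop (nhds 1) :=
    phi_tendsto.comp (tendsto_nhdsWithin_iff.mpr ⟨hu0,
      Eventually.of_forall fun n => by simp [(hu n).ne']⟩)
  have h2 := htop.div hphi one_ne_zero
  rw [div_one] at h2
  refine h2.congr fun n => ?_
  have h3 := (hne n).ne'
  have h4 := (hu n).ne'
  show (n:ℝ) * (1 - Real.exp (-u n)) / ((1 - Real.exp (-u n)) / u n) = n * u n
  field_simp


lemma jump_lemma {Ω : Type*} (Z : ℤ → Ω → ℝ) (c₀ c₁ : ℝ) (hc₀ : 0 < c₀) (hc : c₀ < c₁)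
    (x : ℝ) (hx : 0 < x) (m : ℕ) (hm : 1 ≤ m) (ω : Ω)
    (hsmall : ∀ j : ℤ, 0 ≤ j → j ≤ (m:ℤ) - 1 → Z j ω ≤ (c₀ / (2 * c₁)) * x)
    (hbig : Z (m:ℤ) ω > x) :
    runningMax Z c₀ c₁ m ω - runningMax Z c₀ c₁ (m-1) ω ≥ c₀ / 2 * x ∧
    runningMax Z c₀ c₁ (m+1) ω - runningMax Z c₀ c₁ m ω ≥ (c₁ - c₀) * x := by
  have hc₁ : 0 < c₁ := hc₀.trans hc
  set β : ℝ := c₀ / (2 * c₁) with hβ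
  have hβx : c₁ * (β * x) = c₀ / 2 * x := by rw [hβ]; field_simp
  have hT : (0:ℝ) ≤ c₀ / 2 * x := by positivity
  have hβxpos : 0 < β * x := by rw [hβ]; positivity
  have key2 : ∀ z : ℝ, z ≤ β * x → c₁ * z ≤ c₀ / 2 * x := fun z hz => by
    rw [← hβx]; exact mul_le_mul_of_nonneg_left hz hc₁.le
  have key1 : ∀ z : ℝ, z ≤ β * x → c₀ * z ≤ c₀ / 2 * x := fun z hz => by
    have h1 := mul_le_mul_of_nonneg_left hz hc₀.le
    have h2 : c₀ * (β * x) ≤ c₁ * (β * x) := mul_le_mul_of_nonneg_right hc.le hβxpos.le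
    linarith
  have hTlt : c₀ / 2 * x < c₀ * Z (m:ℤ) ω := by nlinarith
  -- S_{m-1} ≤ c₀/2 * x
  have h1 : runningMax Z c₀ c₁ (m-1) ω ≤ c₀ / 2 * x := by
    refine (Finset.fold_max_le _).mpr ⟨hT, fun j hj => ?_⟩
    rw [Finset.mem_Icc] at hj
    have hj1 : (0:ℤ) ≤ (j:ℤ) ∧ (j:ℤ) ≤ (m:ℤ) - 1 := by omega
    have hj2 : (0:ℤ) ≤ (j:ℤ) - 1 ∧ (j:ℤ) - 1 ≤ (m:ℤ) - 1 := by omega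
    exact max_le (key1 _ (hsmall _ hj1.1 hj1.2)) (key2 _ (hsmall _ hj2.1 hj2.2))
  -- S_m ≤ c₀ * Z_m and ≥
  have h2u : runningMax Z c₀ c₁ m ω ≤ c₀ * Z (m:ℤ) ω := by
    refine (Finset.fold_max_le _).mpr ⟨by nlinarith, fun j hj => ?_⟩
    rw [Finset.mem_Icc] at hj
    rcases eq_or_lt_of_le hj.2 with hjm | hjm
    · subst hjm
      have hj2 : (0:ℤ) ≤ (j:ℤ) - 1 ∧ (j:ℤ) - 1 ≤ (j:ℤ) - 1 := by omega
      have hs2 := key2 _ (hsmall _ hj2.1 hj2.2)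
      refine max_le le_rfl (by linarith)
    · have hj1 : (0:ℤ) ≤ (j:ℤ) ∧ (j:ℤ) ≤ (m:ℤ) - 1 := by omega
      have hj2 : (0:ℤ) ≤ (j:ℤ) - 1 ∧ (j:ℤ) - 1 ≤ (m:ℤ) - 1 := by omega
      have hs1 := key1 _ (hsmall _ hj1.1 hj1.2)
      have hs2 := key2 _ (hsmall _ hj2.1 hj2.2)
      exact max_le (by linarith) (by linarith)
  have h2l : c₀ * Z (m:ℤ) ω ≤ runningMax Z c₀ c₁ m ω :=
    (Finset.le_fold_max _).mpr (Or.inr ⟨m, Finset.mem_Icc.mpr ⟨hm, le_rfl⟩, le_max_left _ _⟩)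
  have h3 : c₁ * Z (m:ℤ) ω ≤ runningMax Z c₀ c₁ (m+1) ω := by
    refine (Finset.le_fold_max _).mpr (Or.inr ⟨m+1, Finset.mem_Icc.mpr ⟨by omega, le_rfl⟩, ?_⟩)
    have he : ((m+1:ℕ):ℤ) - 1 = (m:ℤ) := by push_cast; ring
    rw [he]
    exact le_max_right _ _
  constructor <;> nlinarith

/-- **Two large consecutive jumps of the running maximum occur with positive probability.**
For the moving maxima sequence `X_n = max(c₀ Z_n, c₁ Z_{n-1})` built from i.i.d. unit Fréchet
variables with `c₁ > c₀ > 0`, `c₀ + c₁ = 1`, and `n P(Z_1 > a_n) → 1`, there exists `ε > 0`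
such that
`liminf_n P(∃ i ∈ {1,…,n-1} : S_i - S_{i-1} ≥ (c₀ ε/2) a_n ∧ S_{i+1} - S_i ≥ (c₁-c₀) ε a_n)`
is strictly positive. -/
theorem two_jump_positive_probability
    {Ω : Type*} [MeasurableSpace Ω] (P : Measure Ω) [IsProbabilityMeasure P]
    (Z : ℤ → Ω → ℝ) (hZmeas : ∀ i, Measurable (Z i))
    (hindep : iIndepFun Z P)
    (hfrechet : ∀ i : ℤ,
      (∀ x : ℝ, 0 < x → (P {ω | Z i ω ≤ x}).toReal = Real.exp (-(1 / x))) ∧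
      (∀ x : ℝ, x ≤ 0 → P {ω | Z i ω ≤ x} = 0))
    (c₀ c₁ : ℝ) (hc₀ : 0 < c₀) (hc : c₀ < c₁) (hsum : c₀ + c₁ = 1)
    (a : ℕ → ℝ) (hapos : ∀ n, 0 < a n)
    (ha : Tendsto (fun n : ℕ => (n : ℝ) * (P {ω | Z 1 ω > a n}).toReal) atTop (nhds 1)) :
    ∃ ε : ℝ, 0 < ε ∧
      0 < Filter.liminf
        (fun n : ℕ =>
          (P {ω | ∃ i ∈ Finset.Icc 1 (n - 1),
            runningMax Z c₀ c₁ i ω - runningMax Z c₀ c₁ (i - 1) ω ≥ (c₀ * ε / 2) * a n ∧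
            runningMax Z c₀ c₁ (i + 1) ω - runningMax Z c₀ c₁ i ω
              ≥ (c₁ - c₀) * ε * a n}).toReal)
        atTop := by
  refine ⟨1, one_pos, ?_⟩
  have hc₁ : 0 < c₁ := hc₀.trans hc
  set β : ℝ := c₀ / (2 * c₁) with hβ
  have hβpos : 0 < β := by rw [hβ]; positivity
  have hβlt1 : β < 1 := by rw [hβ]; rw [div_lt_one (by positivity)]; linarith
  -- distribution facts
  have hle : ∀ (j : ℤ) (x : ℝ), 0 < x → (P {ω | Z j ω ≤ x}).toReal = Real.exp (-(1/x)) :=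
    fun j => (hfrechet j).1
  have hmeasle : ∀ (j : ℤ) (x : ℝ), MeasurableSet {ω | Z j ω ≤ x} :=
    fun j x => measurableSet_le (hZmeas j) measurable_const
  have hgt : ∀ (j : ℤ) (x : ℝ), 0 < x →
      (P {ω | Z j ω > x}).toReal = 1 - Real.exp (-(1/x)) := by
    intro j x hx
    have hs : {ω | Z j ω > x} = {ω | Z j ω ≤ x}ᶜ := by ext ω; simp [not_le]
    rw [hs, measure_compl (hmeasle j x) (measure_ne_top _ _), measure_univ,
      ENNReal.toReal_sub_of_le prob_le_one ENNReal.one_ne_top, ENNReal.toReal_one, hle j x hx]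
  -- sequence limits
  have hupos : ∀ n, 0 < 1 / a n := fun n => one_div_pos.mpr (hapos n)
  have htop : Tendsto (fun n : ℕ => (n : ℝ) * (1 - Real.exp (-(1 / a n)))) atTop (nhds 1) :=
    ha.congr fun n => by rw [hgt 1 (a n) (hapos n)]
  obtain ⟨hu0, hnu⟩ := seq_limits hupos htop
  -- p and q
  set p : ℕ → ℝ := fun n => 1 - Real.exp (-(1 / a n)) with hp
  set q : ℕ → ℝ := fun n => Real.exp (-(1 / (β * a n))) with hq
  have hq0 : ∀ n, 0 ≤ q n := fun n => (Real.exp_pos _).le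
  have hq1 : ∀ n, q n ≤ 1 := fun n => Real.exp_le_one_iff.mpr (by
    have := hapos n; rw [neg_nonpos]; positivity)
  have hp0 : ∀ n, 0 ≤ p n := fun n => by
    have : Real.exp (-(1 / a n)) ≤ 1 := Real.exp_le_one_iff.mpr (by
      have := hapos n; rw [neg_nonpos]; positivity)
    simp only [hp]; linarith
  -- the events
  set Ev : ℕ → ℕ → Set Ω := fun n m => ⋂ j ∈ Finset.Icc (0:ℤ) (m:ℤ),
    (if j = (m:ℤ) then {ω | Z j ω > a n} else {ω | Z j ω ≤ β * a n}) with hEv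
  have hEvMeas : ∀ n m, MeasurableSet (Ev n m) := by
    intro n m
    refine MeasurableSet.biInter (Set.to_countable _) fun j _ => ?_
    split_ifs
    · exact measurableSet_lt measurable_const (hZmeas j)
    · exact hmeasle j _
  have hEvProb : ∀ n m, (P (Ev n m)).toReal = q n ^ m * p n := by
    intro n m
    have hmm : (m:ℤ) ∈ Finset.Icc (0:ℤ) (m:ℤ) := Finset.mem_Icc.mpr ⟨Int.ofNat_nonneg m, le_rfl⟩
    have hmeas' : ∀ j ∈ Finset.Icc (0:ℤ) (m:ℤ),
        MeasurableSet[MeasurableSpace.comap (Z j) inferInstance]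
          (if j = (m:ℤ) then {ω | Z j ω > a n} else {ω | Z j ω ≤ β * a n}) := by
      intro j _
      split_ifs
      · exact ⟨Set.Ioi (a n), measurableSet_Ioi, rfl⟩
      · exact ⟨Set.Iic (β * a n), measurableSet_Iic, rfl⟩
    rw [hEv]
    rw [hindep.meas_biInter hmeas', ENNReal.toReal_prod,
      ← Finset.mul_prod_erase _ _ hmm, if_pos rfl, hgt _ _ (hapos n)]
    have h2 : ∀ j ∈ (Finset.Icc (0:ℤ) (m:ℤ)).erase (m:ℤ),
        (P (if j = (m:ℤ) then {ω | Z j ω > a n} else {ω | Z j ω ≤ β * a n})).toReal = q n := by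
      intro j hj
      rw [if_neg (Finset.ne_of_mem_erase hj)]
      exact hle j _ (mul_pos hβpos (hapos n))
    rw [Finset.prod_congr rfl h2, Finset.prod_const, Finset.card_erase_of_mem hmm]
    have hcard : (Finset.Icc (0:ℤ) (m:ℤ)).card = m + 1 := by
      rw [Int.card_Icc]; omega
    rw [hcard]
    simp only [Nat.add_sub_cancel, hp, hq]
    ring
  -- disjointness
  have hkey : ∀ n (m₁ m₂ : ℕ), m₁ < m₂ → Disjoint (Ev n m₁) (Ev n m₂) := by
    intro n m₁ m₂ hlt
    rw [Set.disjoint_left]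
    intro ω h1 h2
    have hb : Z (m₁:ℤ) ω > a n := by
      have := Set.mem_iInter₂.mp h1 (m₁:ℤ)
        (Finset.mem_Icc.mpr ⟨Int.ofNat_nonneg m₁, le_rfl⟩)
      rwa [if_pos rfl] at this
    have hsm : Z (m₁:ℤ) ω ≤ β * a n := by
      have := Set.mem_iInter₂.mp h2 (m₁:ℤ)
        (Finset.mem_Icc.mpr ⟨Int.ofNat_nonneg m₁, by exact_mod_cast hlt.le⟩)
      rwa [if_neg (by exact_mod_cast hlt.ne)] at this
    have : β * a n < a n := by nlinarith [hapos n]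
    linarith
  -- inclusion into the target event
  have hincl : ∀ n : ℕ, (⋃ m ∈ Finset.Icc 1 (n-1), Ev n m) ⊆
      {ω | ∃ i ∈ Finset.Icc 1 (n - 1),
        runningMax Z c₀ c₁ i ω - runningMax Z c₀ c₁ (i - 1) ω ≥ (c₀ * 1 / 2) * a n ∧
        runningMax Z c₀ c₁ (i + 1) ω - runningMax Z c₀ c₁ i ω ≥ (c₁ - c₀) * 1 * a n} := by
    intro n ω hω
    obtain ⟨m, hm, hEvm⟩ := Set.mem_iUnion₂.mp hω
    rw [Finset.mem_Icc] at hm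
    have hbig : Z (m:ℤ) ω > a n := by
      have := Set.mem_iInter₂.mp hEvm (m:ℤ)
        (Finset.mem_Icc.mpr ⟨Int.ofNat_nonneg m, le_rfl⟩)
      rwa [if_pos rfl] at this
    have hsmall : ∀ j : ℤ, 0 ≤ j → j ≤ (m:ℤ) - 1 → Z j ω ≤ β * a n := by
      intro j hj0 hj1
      have := Set.mem_iInter₂.mp hEvm j (Finset.mem_Icc.mpr ⟨hj0, by omega⟩)
      rwa [if_neg (by omega)] at this
    obtain ⟨hj1, hj2⟩ := jump_lemma Z c₀ c₁ hc₀ hc (a n) (hapos n) m hm.1 ω hsmall hbig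
    refine ⟨m, Finset.mem_Icc.mpr hm, ?_, ?_⟩
    · have he : (c₀ * 1 / 2) * a n = c₀ / 2 * a n := by ring
      rw [he]; exact hj1
    · have he : (c₁ - c₀) * 1 * a n = (c₁ - c₀) * a n := by ring
      rw [he]; exact hj2
  -- lower bound for the probability
  set g : ℕ → ℝ := fun n => ((n-1:ℕ):ℝ) * (q n ^ (n-1) * p n) with hg
  have hbound : ∀ n : ℕ, 2 ≤ n → g n ≤
      (P {ω | ∃ i ∈ Finset.Icc 1 (n - 1),
        runningMax Z c₀ c₁ i ω - runningMax Z c₀ c₁ (i - 1) ω ≥ (c₀ * 1 / 2) * a n ∧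
        runningMax Z c₀ c₁ (i + 1) ω - runningMax Z c₀ c₁ i ω ≥ (c₁ - c₀) * 1 * a n}).toReal := by
    intro n hn
    have hdisj : Set.PairwiseDisjoint ↑(Finset.Icc 1 (n-1)) (Ev n) := by
      intro m₁ _ m₂ _ hne
      rcases lt_or_gt_of_ne hne with h | h
      · exact hkey n m₁ m₂ h
      · exact (hkey n m₂ m₁ h).symm
    have hU := measure_biUnion_finset (μ := P) hdisj (fun m _ => hEvMeas n m)
    have hmono : (P (⋃ m ∈ Finset.Icc 1 (n-1), Ev n m)).toReal ≤ _ :=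
      ENNReal.toReal_mono (measure_ne_top _ _) (measure_mono (hincl n))
    refine le_trans ?_ hmono
    rw [hU, ENNReal.toReal_sum (fun m _ => measure_ne_top _ _)]
    have hterm : ∀ m ∈ Finset.Icc 1 (n-1), q n ^ (n-1) * p n ≤ (P (Ev n m)).toReal := by
      intro m hm
      rw [hEvProb n m]
      exact mul_le_mul_of_nonneg_right
        (pow_le_pow_of_le_one (hq0 n) (hq1 n) (Finset.mem_Icc.mp hm).2) (hp0 n)
    have hsum' := Finset.card_nsmul_le_sum _ _ _ hterm
    rw [Nat.card_Icc] at hsum'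
    simp only [Nat.add_sub_cancel] at hsum'
    rw [hg]
    simpa [nsmul_eq_mul] using hsum'
  -- limit of g
  have hexp1 : Tendsto (fun n : ℕ => Real.exp (-(1 / a n))) atTop (nhds 1) := by
    have hn0 : Tendsto (fun n : ℕ => -(1 / a n)) atTop (nhds 0) := by simpa using hu0.neg
    have h2 := (Real.continuous_exp.tendsto 0).comp hn0
    simpa [Function.comp_def] using h2
  have hplim : Tendsto p atTop (nhds 0) := by
    have h2 : Tendsto (fun n : ℕ => (1:ℝ) - Real.exp (-(1 / a n))) atTop (nhds (1 - 1)) :=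
      Tendsto.sub tendsto_const_nhds hexp1
    rw [(by norm_num : (1:ℝ) - 1 = 0)] at h2
    exact h2
  have hA : Tendsto (fun n : ℕ => ((n-1:ℕ):ℝ) * p n) atTop (nhds 1) := by
    have h2 := htop.sub hplim
    rw [sub_zero] at h2
    refine h2.congr' ?_
    filter_upwards [eventually_ge_atTop 1] with n hn
    simp only [hp]
    push_cast [Nat.cast_sub hn]
    ring
  have hexpo : Tendsto (fun n : ℕ => ((n-1:ℕ):ℝ) * (1 / (β * a n))) atTop (nhds (1/β)) := by
    have h2 := (hnu.sub hu0).mul_const (1/β)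
    rw [sub_zero, one_mul] at h2
    refine h2.congr' ?_
    filter_upwards [eventually_ge_atTop 1] with n hn
    have ha0 := (hapos n).ne'
    have hβ0 := hβpos.ne'
    push_cast [Nat.cast_sub hn]
    field_simp
  have hB : Tendsto (fun n : ℕ => q n ^ (n-1)) atTop (nhds (Real.exp (-(1/β)))) := by
    have h2 := (Real.continuous_exp.tendsto _).comp hexpo.neg
    refine h2.congr fun n => ?_
    show Real.exp (-(((n-1:ℕ):ℝ) * (1 / (β * a n)))) = q n ^ (n-1)
    rw [hq, ← Real.exp_nat_mul]
    congr 1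
    ring
  have hglim : Tendsto g atTop (nhds (Real.exp (-(1/β)))) := by
    have h2 := hA.mul hB
    rw [one_mul] at h2
    refine h2.congr fun n => ?_
    rw [hg]
    ring
  -- conclude
  set L : ℝ := Real.exp (-(1/β)) with hL
  have hLpos : 0 < L := Real.exp_pos _
  have hev : ∀ᶠ n in atTop, L/2 ≤ g n :=
    hglim.eventually (eventually_ge_nhds (by linarith))
  have hfe : ∀ᶠ n in atTop, L/2 ≤
      (P {ω | ∃ i ∈ Finset.Icc 1 (n - 1),
        runningMax Z c₀ c₁ i ω - runningMax Z c₀ c₁ (i - 1) ω ≥ (c₀ * 1 / 2) * a n ∧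
        runningMax Z c₀ c₁ (i + 1) ω - runningMax Z c₀ c₁ i ω ≥ (c₁ - c₀) * 1 * a n}).toReal := by
    filter_upwards [hev, eventually_ge_atTop 2] with n h1 h2
    exact le_trans h1 (hbound n h2)
  have hcob : IsCoboundedUnder (· ≥ ·) atTop
      (fun n : ℕ =>
        (P {ω | ∃ i ∈ Finset.Icc 1 (n - 1),
          runningMax Z c₀ c₁ i ω - runningMax Z c₀ c₁ (i - 1) ω ≥ (c₀ * 1 / 2) * a n ∧
          runningMax Z c₀ c₁ (i + 1) ω - runningMax Z c₀ c₁ i ω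
            ≥ (c₁ - c₀) * 1 * a n}).toReal) := by
    refine IsBoundedUnder.isCoboundedUnder_ge (isBoundedUnder_of ⟨1, fun n => ?_⟩)
    have h3 : (P {ω | ∃ i ∈ Finset.Icc 1 (n - 1),
          runningMax Z c₀ c₁ i ω - runningMax Z c₀ c₁ (i - 1) ω ≥ (c₀ * 1 / 2) * a n ∧
          runningMax Z c₀ c₁ (i + 1) ω - runningMax Z c₀ c₁ i ω
            ≥ (c₁ - c₀) * 1 * a n}).toReal ≤ ((1:ENNReal)).toReal :=
      ENNReal.toReal_mono ENNReal.one_ne_top prob_le_one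
    simpa using h3
  have hlim := Filter.le_liminf_of_le hcob hfe
  exact lt_of_lt_of_le (by positivity) hlim
end

section
/- Let (Z_n)_{n∈ℤ} be i.i.d. unit Fréchet random variables, let c_1 > c_0 > 0 with c_0 + c_1 = 1, define X_n = max(c_0 Z_n, c_1 Z_{n−1}) for n ∈ ℤ, and let (a_n) be positive reals with n·P(Z_1 > a_n) → 1. Define the partial maxima process M_n : [0,1] → ℝ by M_n(t) = a_n^{-1}·max_{1≤i≤⌊nt⌋} X_i (with M_n(t) = 0 for t < 1/n). Then there exists ε > 0 such that lim_{δ→0+} limsup_{n→∞} P(ω'_δ(M_n) > ε) > 0; consequently (M_n) does not satisfy the J₁-tightness oscillation criterion. -/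
open MeasureTheory Filter ProbabilityTheory

noncomputable def oscJ1 (g : ℝ → ℝ) (δ : ℝ) : ℝ :=
  sSup {y : ℝ | ∃ t₁ t t₂ : ℝ, 0 ≤ t₁ ∧ t₁ ≤ t ∧ t ≤ t₂ ∧ t₂ ≤ 1 ∧ t₂ - t₁ ≤ δ ∧
    y = min |g t - g t₁| |g t₂ - g t|}

noncomputable def partialMaxProcess {Ω : Type*} (Z : ℤ → Ω → ℝ) (c₀ c₁ : ℝ) (a : ℕ → ℝ)
    (n : ℕ) (ω : Ω) (t : ℝ) : ℝ :=
  ((Finset.Icc (1 : ℤ) ⌊(n : ℝ) * t⌋).fold max 0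
    (fun i => max (c₀ * Z i ω) (c₁ * Z (i - 1) ω))) / a n

namespace J1Aux

def oscSet (g : ℝ → ℝ) (δ : ℝ) : Set ℝ :=
  {y : ℝ | ∃ t₁ t t₂ : ℝ, 0 ≤ t₁ ∧ t₁ ≤ t ∧ t ≤ t₂ ∧ t₂ ≤ 1 ∧ t₂ - t₁ ≤ δ ∧
    y = min |g t - g t₁| |g t₂ - g t|}

lemma oscJ1_eq (g : ℝ → ℝ) (δ : ℝ) : oscJ1 g δ = sSup (oscSet g δ) := rfl

lemma oscSet_nonempty {g : ℝ → ℝ} {δ : ℝ} (hδ : 0 ≤ δ) : (oscSet g δ).Nonempty :=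
  ⟨0, 0, 0, 0, le_rfl, le_rfl, le_rfl, zero_le_one, by simpa using hδ, by simp⟩

lemma oscSet_mono {g : ℝ → ℝ} {δ δ' : ℝ} (h : δ ≤ δ') : oscSet g δ ⊆ oscSet g δ' := by
  rintro y ⟨t₁, t, t₂, h0, h1, h2, h3, h4, rfl⟩
  exact ⟨t₁, t, t₂, h0, h1, h2, h3, h4.trans h, rfl⟩

lemma oscSet_subset_Iic {g : ℝ → ℝ} {δ C : ℝ}
    (hg : ∀ t : ℝ, 0 ≤ t → t ≤ 1 → 0 ≤ g t ∧ g t ≤ C) :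
    oscSet g δ ⊆ Set.Iic C := by
  rintro y ⟨t₁, t, t₂, h0, h1, h2, h3, h4, rfl⟩
  have hgt := hg t (h0.trans h1) ((h2.trans h3))
  have hgt₁ := hg t₁ h0 (h1.trans (h2.trans h3))
  have : |g t - g t₁| ≤ C := by
    rw [abs_sub_le_iff]; constructor <;> linarith [hgt.1, hgt.2, hgt₁.1, hgt₁.2]
  exact le_trans (min_le_left _ _) this

lemma fold_max_mono {f : ℤ → ℝ} {S T : Finset ℤ} (h : S ⊆ T) :
    S.fold max 0 f ≤ T.fold max 0 f := by
  rw [Finset.fold_max_le]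
  exact ⟨(Finset.le_fold_max _).2 (Or.inl le_rfl),
    fun x hx => (Finset.le_fold_max _).2 (Or.inr ⟨x, h hx, le_rfl⟩)⟩

lemma fold_max_nonneg (f : ℤ → ℝ) (S : Finset ℤ) : 0 ≤ S.fold max 0 f :=
  (Finset.le_fold_max _).2 (Or.inl le_rfl)

lemma pmp_bounds {Ω : Type*} (Z : ℤ → Ω → ℝ) (c₀ c₁ : ℝ) (a : ℕ → ℝ) (n : ℕ) (ω : Ω)
    (han : 0 < a n) (t : ℝ) (ht0 : 0 ≤ t) (ht1 : t ≤ 1) :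
    0 ≤ partialMaxProcess Z c₀ c₁ a n ω t ∧
      partialMaxProcess Z c₀ c₁ a n ω t ≤
        ((Finset.Icc (1 : ℤ) (n : ℤ)).fold max 0
          (fun i => max (c₀ * Z i ω) (c₁ * Z (i - 1) ω))) / a n := by
  unfold partialMaxProcess
  refine ⟨div_nonneg (fold_max_nonneg _ _) han.le, ?_⟩
  gcongr
  apply fold_max_mono
  apply Finset.Icc_subset_Icc le_rfl
  calc ⌊(n : ℝ) * t⌋ ≤ ⌊(n : ℝ)⌋ := Int.floor_le_floor (by nlinarith)
  _ = (n : ℤ) := Int.floor_natCast n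

end J1Aux

lemma floor_mul_div (n : ℕ) (hn : 0 < n) (k : ℤ) : ⌊(n : ℝ) * ((k : ℝ) / (n : ℝ))⌋ = k := by
  have hne : (n : ℝ) ≠ 0 := Nat.cast_ne_zero.2 hn.ne'
  have : (n : ℝ) * ((k : ℝ) / (n : ℝ)) = (k : ℝ) := by field_simp
  rw [this, Int.floor_intCast]

lemma key_det {Ω : Type*} (Z : ℤ → Ω → ℝ) {c₀ c₁ : ℝ} (hc₀ : 0 < c₀) (hc : c₀ < c₁)
    (a : ℕ → ℝ) {n : ℕ} (han : 0 < a n) {s : ℝ}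
    (hs1 : 2 + c₁ ≤ c₀ * s) (hs2 : 2 ≤ (c₁ - c₀) * s)
    {i : ℤ} (hi1 : 1 ≤ i) (hin : i ≤ (n : ℤ) - 1) (ω : Ω)
    (hbig : s * a n < Z i ω)
    (hsmall : ∀ j : ℤ, 0 ≤ j → j ≤ (n : ℤ) → j ≠ i → Z j ω ≤ a n)
    {δ : ℝ} (hδ : 2 / (n : ℝ) ≤ δ) :
    1 < oscJ1 (partialMaxProcess Z c₀ c₁ a n ω) δ := by
  have hc₁ : 0 < c₁ := hc₀.trans hc
  have hs0 : 0 < s := by nlinarith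
  have hs1' : 1 < s := by nlinarith
  have hn2 : (2 : ℤ) ≤ (n : ℤ) := by omega
  have hn0 : 0 < n := by omega
  have hnR : (0 : ℝ) < (n : ℝ) := by exact_mod_cast (by omega : (0:ℤ) < (n:ℤ))
  have hZi : a n < Z i ω := by nlinarith
  set X : ℤ → ℝ := fun j => max (c₀ * Z j ω) (c₁ * Z (j - 1) ω) with hX
  set Fld : ℤ → ℝ := fun k => (Finset.Icc (1 : ℤ) k).fold max 0 X with hFld
  set g := partialMaxProcess Z c₀ c₁ a n ω with hg
  -- values of g at the three points
  have hgval : ∀ k : ℤ, g ((k : ℝ) / (n : ℝ)) = Fld k / a n := by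
    intro k
    rw [hg]
    unfold partialMaxProcess
    rw [floor_mul_div n hn0 k]
  -- small X bound for j < i
  have hXsmall : ∀ j : ℤ, 1 ≤ j → j < i → X j ≤ c₁ * a n := by
    intro j h1 h2
    have hj : Z j ω ≤ a n := hsmall j (by omega) (by omega) (by omega)
    have hj' : Z (j - 1) ω ≤ a n := hsmall (j - 1) (by omega) (by omega) (by omega)
    have : c₀ * Z j ω ≤ c₁ * a n := by nlinarith
    have : c₁ * Z (j - 1) ω ≤ c₁ * a n := by nlinarith
    simp only [hX, max_le_iff]; constructor <;> nlinarith
  have hA : Fld (i - 1) ≤ c₁ * a n := by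
    rw [hFld, Finset.fold_max_le]
    refine ⟨by positivity, fun j hj => ?_⟩
    rw [Finset.mem_Icc] at hj
    exact hXsmall j hj.1 (by omega)
  have hB' : c₀ * Z i ω ≤ Fld i :=
    (Finset.le_fold_max _).2 (Or.inr ⟨i, Finset.mem_Icc.2 ⟨hi1, le_rfl⟩, le_max_left _ _⟩)
  have hB : Fld i ≤ c₀ * Z i ω := by
    rw [hFld, Finset.fold_max_le]
    refine ⟨by nlinarith, fun j hj => ?_⟩
    rw [Finset.mem_Icc] at hj
    rcases eq_or_lt_of_le hj.2 with rfl | hlt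
    · have hj' : Z (j - 1) ω ≤ a n := hsmall (j - 1) (by omega) (by omega) (by omega)
      simp only [hX, max_le_iff]
      refine ⟨le_rfl, ?_⟩
      nlinarith [mul_le_mul_of_nonneg_left hj' hc₁.le, mul_lt_mul_of_pos_left hbig hc₀,
        mul_le_mul_of_nonneg_right hs1 han.le, han]
    · refine (hXsmall j hj.1 hlt).trans ?_
      nlinarith [mul_le_mul_of_nonneg_right hs1 han.le, mul_lt_mul_of_pos_left hbig hc₀, han]
  have hC : c₁ * Z i ω ≤ Fld (i + 1) := by
    refine (Finset.le_fold_max _).2 (Or.inr ⟨i + 1, Finset.mem_Icc.2 ⟨by omega, le_rfl⟩, ?_⟩)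
    have hii : i + 1 - 1 = i := by ring
    simp only [hX, hii]
    exact le_max_right _ _
  -- the three points
  set t₁ : ℝ := ((i : ℝ) - 1) / (n : ℝ) with ht₁
  set t : ℝ := (i : ℝ) / (n : ℝ) with ht
  set t₂ : ℝ := ((i : ℝ) + 1) / (n : ℝ) with ht₂
  have hiR1 : (1 : ℝ) ≤ (i : ℝ) := by exact_mod_cast hi1
  have hiRn : (i : ℝ) ≤ (n : ℝ) - 1 := by
    have : ((i : ℝ)) ≤ ((n : ℤ) : ℝ) - 1 := by exact_mod_cast hin
    simpa using this
  have hgt₁ : g t₁ = Fld (i - 1) / a n := by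
    have : t₁ = ((i - 1 : ℤ) : ℝ) / (n : ℝ) := by rw [ht₁]; push_cast; ring_nf
    rw [this, hgval]
  have hgt : g t = Fld i / a n := hgval i
  have hgt₂ : g t₂ = Fld (i + 1) / a n := by
    have : t₂ = ((i + 1 : ℤ) : ℝ) / (n : ℝ) := by rw [ht₂]; push_cast; ring_nf
    rw [this, hgval]
  clear_value X Fld g
  have hd1 : 2 ≤ g t - g t₁ := by
    rw [hgt, hgt₁, div_sub_div_same, le_div_iff₀ han]
    have e1 : c₀ * (s * a n) < c₀ * Z i ω := mul_lt_mul_of_pos_left hbig hc₀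
    have e2 : (2 + c₁) * a n ≤ c₀ * s * a n := mul_le_mul_of_nonneg_right hs1 han.le
    have e3 : 0 < c₁ * a n := mul_pos hc₁ han
    linarith [hA, hB']
  have hd2 : 2 ≤ g t₂ - g t := by
    rw [hgt, hgt₂, div_sub_div_same, le_div_iff₀ han]
    have e1 : (c₁ - c₀) * (s * a n) < (c₁ - c₀) * Z i ω :=
      mul_lt_mul_of_pos_left hbig (by linarith : (0:ℝ) < c₁ - c₀)
    have e2 : 2 * a n ≤ (c₁ - c₀) * s * a n := mul_le_mul_of_nonneg_right hs2 han.le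
    linarith [hB, hC]
  have hy : (2 : ℝ) ≤ min |g t - g t₁| |g t₂ - g t| := by
    rw [abs_of_nonneg (by linarith), abs_of_nonneg (by linarith)]
    exact le_min hd1 hd2
  have hmem : min |g t - g t₁| |g t₂ - g t| ∈ J1Aux.oscSet g δ := by
    refine ⟨t₁, t, t₂, ?_, ?_, ?_, ?_, ?_, rfl⟩
    · apply div_nonneg (by linarith) hnR.le
    · exact div_le_div_of_nonneg_right (by linarith) hnR.le
    · exact div_le_div_of_nonneg_right (by linarith) hnR.le
    · rw [div_le_one hnR]; linarith
    · rw [ht₂, ht₁, div_sub_div_same]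
      have : (i : ℝ) + 1 - ((i : ℝ) - 1) = 2 := by ring
      rw [this]; exact hδ
  have hbdd : BddAbove (J1Aux.oscSet g δ) := by
    refine ⟨((Finset.Icc (1 : ℤ) (n : ℤ)).fold max 0
        (fun i => max (c₀ * Z i ω) (c₁ * Z (i - 1) ω))) / a n, fun y hy => ?_⟩
    refine J1Aux.oscSet_subset_Iic (fun u hu0 hu1 => ?_) hy
    rw [hg]
    exact J1Aux.pmp_bounds Z c₀ c₁ a n ω han u hu0 hu1
  have : min |g t - g t₁| |g t₂ - g t| ≤ oscJ1 g δ := le_csSup hbdd hmem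
  linarith

lemma limit_aux (a : ℕ → ℝ) (hapos : ∀ n, 0 < a n) {s : ℝ} (hs : 0 < s)
    (hlim : Tendsto (fun n : ℕ => (n : ℝ) * (1 - Real.exp (-(1 / a n)))) atTop (nhds 1)) :
    Tendsto (fun n : ℕ => ((n : ℝ) - 1) *
      ((1 - Real.exp (-(1 / (s * a n)))) * (Real.exp (-(1 / a n)))^n)) atTop
      (nhds (Real.exp (-1) / s)) := by
  have hu : ∀ n, 0 < 1 / a n := fun n => div_pos one_pos (hapos n)
  -- 1 - exp (-(1/a n)) → 0
  have h0 : Tendsto (fun n : ℕ => 1 - Real.exp (-(1 / a n))) atTop (nhds 0) := by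
    have : Tendsto (fun n : ℕ => (1 / (n : ℝ)) * ((n : ℝ) * (1 - Real.exp (-(1 / a n)))))
        atTop (nhds (0 * 1)) := Tendsto.mul tendsto_one_div_atTop_nhds_zero_nat hlim
    rw [zero_mul] at this
    refine this.congr' ?_
    filter_upwards [eventually_gt_atTop 0] with n hn
    have : (n : ℝ) ≠ 0 := Nat.cast_ne_zero.2 hn.ne'
    field_simp
  -- exp (-(1/a n)) → 1
  have hexp1 : Tendsto (fun n : ℕ => Real.exp (-(1 / a n))) atTop (nhds 1) := by
    have := h0.const_sub 1
    simpa using this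
  -- 1/a n → 0
  have h2 : Tendsto (fun n : ℕ => 1 / a n) atTop (nhds 0) := by
    have hlog : Tendsto (fun n : ℕ => Real.log (Real.exp (-(1 / a n)))) atTop
        (nhds (Real.log 1)) := (Real.continuousAt_log one_ne_zero).tendsto.comp hexp1
    simp only [Real.log_exp, Real.log_one] at hlog
    simpa using hlog.neg
  -- n / a n → 1
  have h3 : Tendsto (fun n : ℕ => (n : ℝ) * (1 / a n)) atTop (nhds 1) := by
    have hup : Tendsto (fun n : ℕ =>
        ((n : ℝ) * (1 - Real.exp (-(1 / a n)))) * Real.exp (1 / a n)) atTop (nhds 1) := by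
      have := hlim.mul ((Real.continuous_exp.tendsto 0).comp h2)
      simpa using this
    refine tendsto_of_tendsto_of_tendsto_of_le_of_le hlim hup ?_ ?_
    · intro n
      have hle : 1 - Real.exp (-(1 / a n)) ≤ 1 / a n := by
        have := Real.add_one_le_exp (-(1 / a n)); linarith
      have : (0:ℝ) ≤ (n : ℝ) := Nat.cast_nonneg n
      nlinarith
    · intro n
      have hle : 1 / a n ≤ (1 - Real.exp (-(1 / a n))) * Real.exp (1 / a n) := by
        have h := Real.add_one_le_exp (1 / a n)
        have : (1 - Real.exp (-(1 / a n))) * Real.exp (1 / a n)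
            = Real.exp (1 / a n) - 1 := by
          rw [sub_mul, ← Real.exp_add]; simp
        rw [this]; linarith
      have hn : (0:ℝ) ≤ (n : ℝ) := Nat.cast_nonneg n
      calc (n : ℝ) * (1 / a n) ≤ (n : ℝ) * ((1 - Real.exp (-(1 / a n))) * Real.exp (1 / a n)) :=
            mul_le_mul_of_nonneg_left hle hn
        _ = (n : ℝ) * (1 - Real.exp (-(1 / a n))) * Real.exp (1 / a n) := by ring
  -- exp (-(1/a n))^n → exp (-1)
  have h4 : Tendsto (fun n : ℕ => (Real.exp (-(1 / a n)))^n) atTop (nhds (Real.exp (-1))) := by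
    have heq : ∀ n : ℕ, (Real.exp (-(1 / a n)))^n = Real.exp (-((n : ℝ) * (1 / a n))) := by
      intro n
      rw [← Real.exp_nat_mul]
      ring_nf
    have : Tendsto (fun n : ℕ => Real.exp (-((n : ℝ) * (1 / a n)))) atTop
        (nhds (Real.exp (-1))) := (Real.continuous_exp.tendsto _).comp h3.neg
    exact this.congr (fun n => (heq n).symm)
  -- v n := 1/(s * a n)
  have hv0 : Tendsto (fun n : ℕ => 1 / (s * a n)) atTop (nhds 0) := by
    have : Tendsto (fun n : ℕ => (1 / s) * (1 / a n)) atTop (nhds ((1 / s) * 0)) :=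
      h2.const_mul _
    rw [mul_zero] at this
    refine this.congr (fun n => ?_)
    field_simp
  have hnv : Tendsto (fun n : ℕ => (n : ℝ) * (1 / (s * a n))) atTop (nhds (1 / s)) := by
    have : Tendsto (fun n : ℕ => ((n : ℝ) * (1 / a n)) * (1 / s)) atTop (nhds (1 * (1 / s))) :=
      h3.mul_const _
    rw [one_mul] at this
    refine this.congr (fun n => ?_)
    rw [one_div (s * a n), mul_inv]
    ring
  -- n * q n → 1/s  where q n = 1 - exp (-(1/(s a n)))
  have h5 : Tendsto (fun n : ℕ => (n : ℝ) * (1 - Real.exp (-(1 / (s * a n))))) atTop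
      (nhds (1 / s)) := by
    have hlow : Tendsto (fun n : ℕ =>
        ((n : ℝ) * (1 / (s * a n))) * Real.exp (-(1 / (s * a n)))) atTop (nhds (1 / s)) := by
      have := hnv.mul ((Real.continuous_exp.tendsto 0).comp (by simpa using hv0.neg))
      simpa using this
    refine tendsto_of_tendsto_of_tendsto_of_le_of_le hlow hnv ?_ ?_
    · intro n
      have hv : 0 < 1 / (s * a n) := div_pos one_pos (mul_pos hs (hapos n))
      have hle : (1 / (s * a n)) * Real.exp (-(1 / (s * a n)))
          ≤ 1 - Real.exp (-(1 / (s * a n))) := by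
        have h := Real.add_one_le_exp (1 / (s * a n))
        have he : Real.exp (-(1 / (s * a n))) * Real.exp (1 / (s * a n)) = 1 := by
          rw [← Real.exp_add]; simp
        nlinarith [Real.exp_pos (-(1 / (s * a n)))]
      have hn : (0:ℝ) ≤ (n : ℝ) := Nat.cast_nonneg n
      calc (n : ℝ) * (1 / (s * a n)) * Real.exp (-(1 / (s * a n)))
          = (n : ℝ) * ((1 / (s * a n)) * Real.exp (-(1 / (s * a n)))) := by ring
        _ ≤ (n : ℝ) * (1 - Real.exp (-(1 / (s * a n)))) := mul_le_mul_of_nonneg_left hle hn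
    · intro n
      have hle : 1 - Real.exp (-(1 / (s * a n))) ≤ 1 / (s * a n) := by
        have := Real.add_one_le_exp (-(1 / (s * a n))); linarith
      exact mul_le_mul_of_nonneg_left hle (Nat.cast_nonneg n)
  -- q n → 0
  have hq0 : Tendsto (fun n : ℕ => 1 - Real.exp (-(1 / (s * a n)))) atTop (nhds 0) := by
    have := ((Real.continuous_exp.tendsto 0).comp (by simpa using hv0.neg)).const_sub 1
    simpa using this
  -- assemble
  have hmain : Tendsto (fun n : ℕ =>
      ((n : ℝ) * (1 - Real.exp (-(1 / (s * a n))))) * (Real.exp (-(1 / a n)))^n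
        - (1 - Real.exp (-(1 / (s * a n)))) * (Real.exp (-(1 / a n)))^n) atTop
      (nhds ((1 / s) * Real.exp (-1) - 0 * Real.exp (-1))) :=
    (h5.mul h4).sub (hq0.mul h4)
  have : (1 / s) * Real.exp (-1) - 0 * Real.exp (-1) = Real.exp (-1) / s := by ring
  rw [this] at hmain
  exact hmain.congr (fun n => by ring)

lemma meas_event {Ω : Type*} [MeasurableSpace Ω] (P : Measure Ω) [IsProbabilityMeasure P]
    (Z : ℤ → Ω → ℝ) (hZmeas : ∀ i, Measurable (Z i))
    (hindep : iIndepFun Z P)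
    (hfrechet : ∀ i : ℤ, ∀ x : ℝ, 0 < x → (P {ω | Z i ω ≤ x}).toReal = Real.exp (-(1 / x)))
    {s : ℝ} (hs : 0 < s) (a : ℕ → ℝ) (hapos : ∀ n, 0 < a n) (n : ℕ) {i : ℤ}
    (hi : i ∈ Finset.Icc (0 : ℤ) (n : ℤ)) :
    (P (⋂ j ∈ Finset.Icc (0 : ℤ) (n : ℤ),
        Z j ⁻¹' (if j = i then Set.Ioi (s * a n) else Set.Iic (a n)))).toReal
      = (1 - Real.exp (-(1 / (s * a n)))) * (Real.exp (-(1 / a n)))^n := by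
  have hsa : 0 < s * a n := mul_pos hs (hapos n)
  have hIic : ∀ j : ℤ, (P (Z j ⁻¹' Set.Iic (a n))).toReal = Real.exp (-(1 / a n)) := by
    intro j
    have : Z j ⁻¹' Set.Iic (a n) = {ω | Z j ω ≤ a n} := rfl
    rw [this, hfrechet j (a n) (hapos n)]
  have hIoi : (P (Z i ⁻¹' Set.Ioi (s * a n))).toReal = 1 - Real.exp (-(1 / (s * a n))) := by
    have heq : Z i ⁻¹' Set.Ioi (s * a n) = (Z i ⁻¹' Set.Iic (s * a n))ᶜ := by
      rw [← Set.compl_Iic, Set.preimage_compl]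
    rw [heq, measure_compl (hZmeas i measurableSet_Iic) (measure_ne_top P _), measure_univ,
      ENNReal.toReal_sub_of_le prob_le_one ENNReal.one_ne_top, ENNReal.toReal_one]
    have : Z i ⁻¹' Set.Iic (s * a n) = {ω | Z i ω ≤ s * a n} := rfl
    rw [this, hfrechet i (s * a n) hsa]
  have hmeas : ∀ j : ℤ, MeasurableSet (if j = i then Set.Ioi (s * a n) else Set.Iic (a n)) := by
    intro j; split
    · exact measurableSet_Ioi
    · exact measurableSet_Iic
  rw [hindep.measure_inter_preimage_eq_mul (Finset.Icc (0 : ℤ) (n : ℤ)) (fun j _ => hmeas j),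
    ENNReal.toReal_prod, ← Finset.mul_prod_erase _ _ hi, if_pos rfl, hIoi]
  congr 1
  have hprod : ∀ j ∈ (Finset.Icc (0:ℤ) (n:ℤ)).erase i,
      (P (Z j ⁻¹' if j = i then Set.Ioi (s * a n) else Set.Iic (a n))).toReal
        = Real.exp (-(1 / a n)) := by
    intro j hj
    rw [if_neg (Finset.ne_of_mem_erase hj)]
    exact hIic j
  have hcard : ((Finset.Icc (0:ℤ) (n:ℤ)).erase i).card = n := by
    rw [Finset.card_erase_of_mem hi, Int.card_Icc]
    omega
  rw [Finset.prod_congr rfl hprod, Finset.prod_const, hcard]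

lemma meas_gt {Ω : Type*} [MeasurableSpace Ω] (P : Measure Ω) [IsProbabilityMeasure P]
    {Zi : Ω → ℝ} (hm : Measurable Zi)
    (hf : ∀ x : ℝ, 0 < x → (P {ω | Zi ω ≤ x}).toReal = Real.exp (-(1 / x)))
    {x : ℝ} (hx : 0 < x) :
    (P {ω | Zi ω > x}).toReal = 1 - Real.exp (-(1 / x)) := by
  have hset : {ω | Zi ω > x} = {ω | Zi ω ≤ x}ᶜ := by
    ext ω; simp [not_le]
  have hms : MeasurableSet {ω | Zi ω ≤ x} := hm measurableSet_Iic
  rw [hset, measure_compl hms (measure_ne_top P _), measure_univ,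
    ENNReal.toReal_sub_of_le prob_le_one ENNReal.one_ne_top, ENNReal.toReal_one, hf x hx]

lemma meas_union {Ω : Type*} [MeasurableSpace Ω] (P : Measure Ω) [IsProbabilityMeasure P]
    (Z : ℤ → Ω → ℝ) (hZmeas : ∀ i, Measurable (Z i))
    (hindep : iIndepFun Z P)
    (hfrechet : ∀ i : ℤ, ∀ x : ℝ, 0 < x → (P {ω | Z i ω ≤ x}).toReal = Real.exp (-(1 / x)))
    {s : ℝ} (hs : 1 ≤ s) (a : ℕ → ℝ) (hapos : ∀ n, 0 < a n) (n : ℕ) :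
    (P (⋃ i ∈ Finset.Icc (1 : ℤ) ((n : ℤ) - 1), ⋂ j ∈ Finset.Icc (0 : ℤ) (n : ℤ),
        Z j ⁻¹' (if j = i then Set.Ioi (s * a n) else Set.Iic (a n)))).toReal
      = ((Finset.Icc (1 : ℤ) ((n : ℤ) - 1)).card : ℝ)
        * ((1 - Real.exp (-(1 / (s * a n)))) * (Real.exp (-(1 / a n)))^n) := by
  have hs0 : 0 < s := lt_of_lt_of_le one_pos hs
  set E : ℤ → Set Ω := fun i => ⋂ j ∈ Finset.Icc (0 : ℤ) (n : ℤ),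
      Z j ⁻¹' (if j = i then Set.Ioi (s * a n) else Set.Iic (a n)) with hE
  have hEmeas : ∀ i : ℤ, MeasurableSet (E i) := by
    intro i
    refine MeasurableSet.biInter (Finset.Icc (0 : ℤ) (n : ℤ)).countable_toSet
      (fun j hj => hZmeas j ?_)
    split
    · exact measurableSet_Ioi
    · exact measurableSet_Iic
  have hdisj : (↑(Finset.Icc (1 : ℤ) ((n : ℤ) - 1)) : Set ℤ).PairwiseDisjoint E := by
    intro i hi i' hi' hne
    simp only [Finset.coe_Icc, Set.mem_Icc] at hi hi'
    refine Set.disjoint_left.2 (fun ω hω hω' => ?_)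
    have h1 : Z i ω ∈ Set.Ioi (s * a n) := by
      have := Set.mem_iInter₂.1 hω i (Finset.mem_Icc.2 ⟨by omega, by omega⟩)
      rwa [if_pos rfl] at this
    have h2 : Z i ω ∈ Set.Iic (a n) := by
      have := Set.mem_iInter₂.1 hω' i (Finset.mem_Icc.2 ⟨by omega, by omega⟩)
      rwa [if_neg hne] at this
    rw [Set.mem_Ioi] at h1
    rw [Set.mem_Iic] at h2
    nlinarith [hapos n]
  rw [measure_biUnion_finset hdisj (fun i _ => hEmeas i), ENNReal.toReal_sum
    (fun i _ => measure_ne_top P _)]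
  rw [Finset.sum_congr rfl (fun i hi => by
    have hi' := Finset.mem_Icc.1 hi
    exact meas_event P Z hZmeas hindep hfrechet hs0 a hapos n
      (Finset.mem_Icc.2 ⟨by omega, by omega⟩))]
  rw [Finset.sum_const, nsmul_eq_mul]

lemma osc_bdd {Ω : Type*} (Z : ℤ → Ω → ℝ) (c₀ c₁ : ℝ) (a : ℕ → ℝ) (n : ℕ) (ω : Ω)
    (han : 0 < a n) (δ : ℝ) :
    BddAbove (J1Aux.oscSet (partialMaxProcess Z c₀ c₁ a n ω) δ) :=
  ⟨_, fun _ hy => J1Aux.oscSet_subset_Iic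
    (fun u hu0 hu1 => J1Aux.pmp_bounds Z c₀ c₁ a n ω han u hu0 hu1) hy⟩

lemma oscJ1_mono {Ω : Type*} (Z : ℤ → Ω → ℝ) (c₀ c₁ : ℝ) (a : ℕ → ℝ) (n : ℕ) (ω : Ω)
    (han : 0 < a n) {δ δ' : ℝ} (h0 : 0 ≤ δ) (h : δ ≤ δ') :
    oscJ1 (partialMaxProcess Z c₀ c₁ a n ω) δ ≤ oscJ1 (partialMaxProcess Z c₀ c₁ a n ω) δ' := by
  rw [J1Aux.oscJ1_eq, J1Aux.oscJ1_eq]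
  exact csSup_le_csSup (osc_bdd Z c₀ c₁ a n ω han δ') (J1Aux.oscSet_nonempty h0)
    (J1Aux.oscSet_mono h)

/-- **Failure of the `J₁`-tightness oscillation criterion for the partial maxima processes of
moving maxima.** There is `ε > 0` with `lim_{δ→0+} limsup_n P(ω'_δ(M_n) > ε) > 0`; in
particular the `J₁` oscillation criterion `lim_{δ→0+} limsup_n P(ω'_δ(M_n) > ε) = 0` fails. -/
theorem J1_oscillation_criterion_fails
    {Ω : Type*} [MeasurableSpace Ω] (P : Measure Ω) [IsProbabilityMeasure P]
    (Z : ℤ → Ω → ℝ) (hZmeas : ∀ i, Measurable (Z i))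
    (hindep : iIndepFun Z P)
    (hfrechet : ∀ i : ℤ,
      (∀ x : ℝ, 0 < x → (P {ω | Z i ω ≤ x}).toReal = Real.exp (-(1 / x))) ∧
      (∀ x : ℝ, x ≤ 0 → P {ω | Z i ω ≤ x} = 0))
    (c₀ c₁ : ℝ) (hc₀ : 0 < c₀) (hc : c₀ < c₁) (hsum : c₀ + c₁ = 1)
    (a : ℕ → ℝ) (hapos : ∀ n, 0 < a n)
    (ha : Tendsto (fun n : ℕ => (n : ℝ) * (P {ω | Z 1 ω > a n}).toReal) atTop (nhds 1)) :
    ∃ ε : ℝ, 0 < ε ∧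
      (∃ L : ℝ, 0 < L ∧
        Tendsto
          (fun δ : ℝ => Filter.limsup
            (fun n : ℕ =>
              (P {ω | oscJ1 (partialMaxProcess Z c₀ c₁ a n ω) δ > ε}).toReal) atTop)
          (nhdsWithin 0 (Set.Ioi 0)) (nhds L)) ∧
      ¬ Tendsto
          (fun δ : ℝ => Filter.limsup
            (fun n : ℕ =>
              (P {ω | oscJ1 (partialMaxProcess Z c₀ c₁ a n ω) δ > ε}).toReal) atTop)
          (nhdsWithin 0 (Set.Ioi 0)) (nhds 0) := by
  classical
  have hc₁ : 0 < c₁ := hc₀.trans hc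
  have hcc : 0 < c₁ - c₀ := by linarith
  set s : ℝ := (2 + c₁) / c₀ + 2 / (c₁ - c₀) with hs_def
  have hs1 : 2 + c₁ ≤ c₀ * s := by
    rw [hs_def, mul_add, mul_div_cancel₀ _ hc₀.ne']
    have : 0 ≤ c₀ * (2 / (c₁ - c₀)) :=
      mul_nonneg hc₀.le (div_nonneg (by norm_num) hcc.le)
    linarith
  have hs2 : 2 ≤ (c₁ - c₀) * s := by
    rw [hs_def, mul_add, mul_div_cancel₀ _ hcc.ne']
    have : 0 ≤ (c₁ - c₀) * ((2 + c₁) / c₀) :=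
      mul_nonneg hcc.le (div_nonneg (by linarith) hc₀.le)
    linarith
  have hs0 : 0 < s := by nlinarith
  have hsge1 : 1 ≤ s := by nlinarith
  have hfr1 : ∀ i : ℤ, ∀ x : ℝ, 0 < x → (P {ω | Z i ω ≤ x}).toReal = Real.exp (-(1 / x)) :=
    fun i => (hfrechet i).1
  have hgt : ∀ n, (P {ω | Z 1 ω > a n}).toReal = 1 - Real.exp (-(1 / a n)) :=
    fun n => meas_gt P (hZmeas 1) (hfr1 1) (hapos n)
  have hlim : Tendsto (fun n : ℕ => (n : ℝ) * (1 - Real.exp (-(1 / a n)))) atTop (nhds 1) :=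
    ha.congr (fun n => by rw [hgt n])
  have hr := limit_aux a hapos hs0 hlim
  set c : ℝ := Real.exp (-1) / s with hc_def
  have hcpos : 0 < c := div_pos (Real.exp_pos _) hs0
  set F : ℝ → ℝ := fun δ => Filter.limsup (fun n : ℕ =>
      (P {ω | oscJ1 (partialMaxProcess Z c₀ c₁ a n ω) δ > 1}).toReal) atTop with hF_def
  have hf0 : ∀ (δ : ℝ) (n : ℕ),
      0 ≤ (P {ω | oscJ1 (partialMaxProcess Z c₀ c₁ a n ω) δ > 1}).toReal :=
    fun _ _ => ENNReal.toReal_nonneg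
  have hf1 : ∀ (δ : ℝ) (n : ℕ),
      (P {ω | oscJ1 (partialMaxProcess Z c₀ c₁ a n ω) δ > 1}).toReal ≤ 1 := by
    intro δ n
    calc (P {ω | oscJ1 (partialMaxProcess Z c₀ c₁ a n ω) δ > 1}).toReal
        ≤ (1 : ENNReal).toReal := ENNReal.toReal_mono ENNReal.one_ne_top prob_le_one
      _ = 1 := ENNReal.toReal_one
  have hFmono : MonotoneOn F (Set.Ioi (0:ℝ)) := by
    intro δ hδ δ' hδ' hle
    refine limsup_le_limsup (Eventually.of_forall (fun n => ?_))
      (isCoboundedUnder_le_of_le atTop (fun n => hf0 δ n))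
      (isBoundedUnder_of ⟨1, fun n => hf1 δ' n⟩)
    refine ENNReal.toReal_mono (measure_ne_top P _) (measure_mono ?_)
    intro ω hω
    exact lt_of_lt_of_le hω (oscJ1_mono Z c₀ c₁ a n ω (hapos n) (le_of_lt hδ) hle)
  have hlow : ∀ δ : ℝ, 0 < δ → c ≤ F δ := by
    intro δ hδ
    set r : ℕ → ℝ := fun n => ((Finset.Icc (1 : ℤ) ((n : ℤ) - 1)).card : ℝ)
        * ((1 - Real.exp (-(1 / (s * a n)))) * (Real.exp (-(1 / a n)))^n) with hr_def
    have hrlim : Tendsto r atTop (nhds c) := by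
      refine hr.congr' ?_
      filter_upwards [eventually_ge_atTop 1] with n hn
      have hcard : ((Finset.Icc (1 : ℤ) ((n : ℤ) - 1)).card : ℝ) = (n : ℝ) - 1 := by
        rw [Int.card_Icc]
        have h1 : ((n:ℤ) - 1 + 1 - 1).toNat = n - 1 := by omega
        rw [h1, Nat.cast_sub hn, Nat.cast_one]
      rw [hr_def]
      simp only
      rw [hcard]
    have hev : ∀ᶠ n : ℕ in atTop, r n ≤
        (P {ω | oscJ1 (partialMaxProcess Z c₀ c₁ a n ω) δ > 1}).toReal := by
      have h2n : Tendsto (fun n : ℕ => 2 / (n:ℝ)) atTop (nhds 0) :=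
        tendsto_const_div_atTop_nhds_zero_nat 2
      filter_upwards [h2n.eventually_le_const hδ, eventually_ge_atTop 1] with n h2δ hn1
      have hmu := meas_union P Z hZmeas hindep hfr1 hsge1 a hapos n
      rw [hr_def]
      simp only
      rw [← hmu]
      refine ENNReal.toReal_mono (measure_ne_top P _) (measure_mono ?_)
      intro ω hω
      obtain ⟨i, hi, hωi⟩ := Set.mem_iUnion₂.1 hω
      have hi' := Finset.mem_Icc.1 hi
      have hbig : s * a n < Z i ω := by
        have := Set.mem_iInter₂.1 hωi i (Finset.mem_Icc.2 ⟨by omega, by omega⟩)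
        rwa [if_pos rfl] at this
      have hsmall : ∀ j : ℤ, 0 ≤ j → j ≤ (n:ℤ) → j ≠ i → Z j ω ≤ a n := by
        intro j hj0 hjn hji
        have := Set.mem_iInter₂.1 hωi j (Finset.mem_Icc.2 ⟨hj0, hjn⟩)
        rwa [if_neg hji] at this
      exact key_det Z hc₀ hc a (hapos n) hs1 hs2 hi'.1 hi'.2 ω hbig hsmall h2δ
    calc c = limsup r atTop := (hrlim.limsup_eq).symm
      _ ≤ F δ := limsup_le_limsup hev
          (hrlim.isBoundedUnder_ge.isCoboundedUnder_le)
          (isBoundedUnder_of ⟨1, fun n => hf1 δ n⟩)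
  have hbddB : BddBelow (F '' Set.Ioi 0) := by
    refine ⟨c, ?_⟩
    rintro y ⟨δ, hδ, rfl⟩
    exact hlow δ hδ
  have hT : Tendsto F (nhdsWithin 0 (Set.Ioi 0)) (nhds (sInf (F '' Set.Ioi 0))) :=
    hFmono.tendsto_nhdsGT hbddB
  have hL : c ≤ sInf (F '' Set.Ioi 0) := by
    refine le_csInf ⟨F 1, ⟨1, Set.mem_Ioi.2 one_pos, rfl⟩⟩ ?_
    rintro y ⟨δ, hδ, rfl⟩
    exact hlow δ hδ
  refine ⟨1, one_pos, ⟨sInf (F '' Set.Ioi 0), lt_of_lt_of_le hcpos hL, hT⟩, fun h0 => ?_⟩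
  have huniq := tendsto_nhds_unique h0 hT
  linarith
end
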